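/- arXiv:2604.10682 — 5 statements merged into one kernel-verified Lean document; each statement's English description precedes it below -/
import Mathlib

section
/- Let N ≥ 1 be an integer, c₀ > 0, μ > 0 and t > 0. Let A : ℝ → Matrix (Fin N) (Fin N) ℝ be such that for every τ ∈ [0, t] the matrix A(τ) is coercive with constant c₀μ, i.e. ⟨v, A(τ)·v⟩ ≥ c₀ μ ‖v‖² for every v ∈ ℝ^N. Let 𝒦 : ℝ → Matrix (Fin N) (Fin N) ℝ be continuous on [0, t] with 𝒦(0) = Id (the identity matrix) and such that for every τ ∈ (0, t), 𝒦 has derivative −𝒦(τ)·A(τ) at τ. Then ‖𝒦(τ)‖_F ≤ √N · e^{−c₀ μ τ} for every τ ∈ [0, t]. -/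
open Set

/-- The Frobenius norm of a real `N × N` matrix. -/
noncomputable def frobNorm {N : ℕ} (M : Matrix (Fin N) (Fin N) ℝ) : ℝ :=
  Real.sqrt (∑ i, ∑ j, (M i j) ^ 2)

/-- Exponential decay of the solution of the backward matrix ODE
`𝒦' = −𝒦 A` with coercive coefficient `A` and initial value the identity. -/
theorem matrix_ode_exponential_decay
    (N : ℕ) (hN : 1 ≤ N) (c₀ μ t : ℝ) (hc₀ : 0 < c₀) (hμ : 0 < μ) (ht : 0 < t)
    (A 𝒦 : ℝ → Matrix (Fin N) (Fin N) ℝ)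
    (hA : ∀ τ ∈ Icc (0 : ℝ) t, ∀ v : Fin N → ℝ,
      c₀ * μ * (∑ i, (v i) ^ 2) ≤ ∑ i, ∑ j, v i * A τ i j * v j)
    (h𝒦cont : ∀ i j, ContinuousOn (fun τ => 𝒦 τ i j) (Icc (0 : ℝ) t))
    (h𝒦0 : 𝒦 0 = 1)
    (h𝒦deriv : ∀ τ ∈ Ioo (0 : ℝ) t, ∀ i j,
      HasDerivAt (fun s => 𝒦 s i j) ((-(𝒦 τ * A τ)) i j) τ) :
    ∀ τ ∈ Icc (0 : ℝ) t,
      frobNorm (𝒦 τ) ≤ Real.sqrt N * Real.exp (-(c₀ * μ * τ)) := by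
  set a : ℝ := 2 * (c₀ * μ) with ha
  set f : ℝ → ℝ := fun τ => ∑ i, ∑ j, (𝒦 τ i j) ^ 2 with hfdef
  have hf0 : f 0 = N := by
    have h1 : ∀ i j : Fin N, ((1 : Matrix (Fin N) (Fin N) ℝ) i j) ^ 2
        = if i = j then (1 : ℝ) else 0 := by
      intro i j
      by_cases h : i = j <;> simp [Matrix.one_apply, h]
    simp [hfdef, h𝒦0, h1]
  have hfnonneg : ∀ τ, 0 ≤ f τ := by
    intro τ
    apply Finset.sum_nonneg; intro i _
    apply Finset.sum_nonneg; intro j _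
    positivity
  have hf' : ∀ τ ∈ Ioo (0 : ℝ) t,
      HasDerivAt f (∑ i, ∑ j, 2 * 𝒦 τ i j * (-(𝒦 τ * A τ)) i j) τ := by
    intro τ hτ
    apply HasDerivAt.fun_sum; intro i _
    apply HasDerivAt.fun_sum; intro j _
    have h := (h𝒦deriv τ hτ i j).fun_pow 2
    simpa [pow_one] using h
  have hbound : ∀ τ ∈ Ioo (0 : ℝ) t,
      (∑ i, ∑ j, 2 * 𝒦 τ i j * (-(𝒦 τ * A τ)) i j) ≤ -a * f τ := by
    intro τ hτ
    have hmem : τ ∈ Icc (0 : ℝ) t := ⟨hτ.1.le, hτ.2.le⟩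
    have key : ∀ i, c₀ * μ * (∑ j, (𝒦 τ i j) ^ 2) ≤ ∑ j, 𝒦 τ i j * (𝒦 τ * A τ) i j := by
      intro i
      have h := hA τ hmem (fun k => 𝒦 τ i k)
      have e : (∑ j, 𝒦 τ i j * (𝒦 τ * A τ) i j)
          = ∑ k, ∑ j, 𝒦 τ i k * A τ k j * 𝒦 τ i j := by
        simp only [Matrix.mul_apply, Finset.mul_sum]
        rw [Finset.sum_comm]
        apply Finset.sum_congr rfl; intro k _
        apply Finset.sum_congr rfl; intro j _
        ring
      rw [e]; exact h
    have step : ∀ i, (∑ j, 2 * 𝒦 τ i j * (-(𝒦 τ * A τ)) i j)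
        ≤ -a * ∑ j, (𝒦 τ i j) ^ 2 := by
      intro i
      have h := key i
      have e2 : (∑ j, 2 * 𝒦 τ i j * (-(𝒦 τ * A τ)) i j)
          = -2 * ∑ j, 𝒦 τ i j * (𝒦 τ * A τ) i j := by
        rw [Finset.mul_sum]
        apply Finset.sum_congr rfl; intro j _
        simp [Matrix.neg_apply]; ring
      rw [e2, ha]
      nlinarith [h]
    calc (∑ i, ∑ j, 2 * 𝒦 τ i j * (-(𝒦 τ * A τ)) i j)
        ≤ ∑ i, -a * ∑ j, (𝒦 τ i j) ^ 2 := Finset.sum_le_sum fun i _ => step i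
      _ = -a * f τ := by rw [hfdef, Finset.mul_sum]
  set g : ℝ → ℝ := fun τ => f τ * Real.exp (a * τ) with hgdef
  have hfcont : ContinuousOn f (Icc (0 : ℝ) t) := by
    apply continuousOn_finset_sum; intro i _
    apply continuousOn_finset_sum; intro j _
    exact (h𝒦cont i j).pow 2
  have hgcont : ContinuousOn g (Icc (0 : ℝ) t) :=
    hfcont.mul (Continuous.continuousOn (by continuity))
  have hg' : ∀ τ ∈ Ioo (0 : ℝ) t, HasDerivAt g
      ((∑ i, ∑ j, 2 * 𝒦 τ i j * (-(𝒦 τ * A τ)) i j) * Real.exp (a * τ)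
        + f τ * (Real.exp (a * τ) * a)) τ := by
    intro τ hτ
    have hexp : HasDerivAt (fun s => Real.exp (a * s)) (Real.exp (a * τ) * a) τ := by
      have : HasDerivAt (fun s : ℝ => a * s) a τ := by
        simpa using (hasDerivAt_id τ).const_mul a
      simpa using this.exp
    exact (hf' τ hτ).mul hexp
  have hganti : AntitoneOn g (Icc (0 : ℝ) t) := by
    apply antitoneOn_of_deriv_nonpos (convex_Icc 0 t) hgcont
    · intro τ hτ
      rw [interior_Icc] at hτ
      exact (hg' τ hτ).differentiableAt.differentiableWithinAt
    · intro τ hτ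
      rw [interior_Icc] at hτ
      rw [(hg' τ hτ).deriv]
      have hb := hbound τ hτ
      have he := Real.exp_pos (a * τ)
      nlinarith [hfnonneg τ]
  intro τ hτ
  have hgτ : g τ ≤ g 0 := hganti ⟨le_refl 0, ht.le⟩ hτ hτ.1
  have hg0 : g 0 = N := by simp [hgdef, hf0]
  have hfτ : f τ ≤ N * Real.exp (-(a * τ)) := by
    have h1 : f τ * Real.exp (a * τ) ≤ N := by rw [← hg0]; exact hgτ
    have h2 : f τ = f τ * Real.exp (a * τ) * Real.exp (-(a * τ)) := by
      rw [mul_assoc, ← Real.exp_add]; simp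
    rw [h2]
    exact mul_le_mul_of_nonneg_right h1 (Real.exp_nonneg _)
  have hexpeq : Real.exp (-(a * τ)) = (Real.exp (-(c₀ * μ * τ))) ^ 2 := by
    rw [sq, ← Real.exp_add, ha]; ring_nf
  have : frobNorm (𝒦 τ) = Real.sqrt (f τ) := rfl
  rw [this]
  calc Real.sqrt (f τ) ≤ Real.sqrt (N * Real.exp (-(a * τ))) := Real.sqrt_le_sqrt hfτ
    _ = Real.sqrt N * Real.exp (-(c₀ * μ * τ)) := by
        rw [hexpeq, Real.sqrt_mul (Nat.cast_nonneg N), Real.sqrt_sq (Real.exp_nonneg _)]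
end

section
/- Let N ≥ 1 be an integer, c₀ > 0, μ > 0 and t > 0. Let A : ℝ → Matrix (Fin N) (Fin N) ℝ be such that for every τ ∈ [0, t], ⟨v, A(τ)·v⟩ ≥ c₀ μ ‖v‖² for every v ∈ ℝ^N, and let R : ℝ → Matrix (Fin N) (Fin N) ℝ be continuous on [0, t]. Suppose X : ℝ → Matrix (Fin N) (Fin N) ℝ is continuous on [0, t], X(0) = 0, and for every τ ∈ (0, t), X has derivative −X(τ)·A(τ) + R(τ) at τ. Then for every τ ∈ [0, t]: ‖X(τ)‖_F ≤ ∫₀^τ e^{−c₀ μ (τ−σ)} ‖R(σ)‖_F dσ. -/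
open Set

set_option maxHeartbeats 1000000 in
/-- Gronwall/Duhamel-type bound for the inhomogeneous matrix ODE
`X' = −X A + R` with coercive coefficient `A` and zero initial value. -/
theorem matrix_ode_duhamel_bound
    (N : ℕ) (hN : 1 ≤ N) (c₀ μ t : ℝ) (hc₀ : 0 < c₀) (hμ : 0 < μ) (ht : 0 < t)
    (A R X : ℝ → Matrix (Fin N) (Fin N) ℝ)
    (hA : ∀ τ ∈ Icc (0 : ℝ) t, ∀ v : Fin N → ℝ,
      c₀ * μ * (∑ i, (v i) ^ 2) ≤ ∑ i, ∑ j, v i * A τ i j * v j)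
    (hRcont : ∀ i j, ContinuousOn (fun τ => R τ i j) (Icc (0 : ℝ) t))
    (hXcont : ∀ i j, ContinuousOn (fun τ => X τ i j) (Icc (0 : ℝ) t))
    (hX0 : X 0 = 0)
    (hXderiv : ∀ τ ∈ Ioo (0 : ℝ) t, ∀ i j,
      HasDerivAt (fun s => X s i j) ((-(X τ * A τ) + R τ) i j) τ) :
    ∀ τ ∈ Icc (0 : ℝ) t,
      frobNorm (X τ) ≤ ∫ s in (0 : ℝ)..τ, Real.exp (-(c₀ * μ * (τ - s))) * frobNorm (R s) := by
  set c : ℝ := c₀ * μ with hc_def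
  have hc : 0 < c := mul_pos hc₀ hμ
  set g : ℝ → ℝ := fun τ => ∑ i, ∑ j, (X τ i j) ^ 2 with hg_def
  set ρ : ℝ → ℝ := fun σ => frobNorm (R σ) with hρ_def
  have hg0 : ∀ τ, 0 ≤ g τ := fun τ =>
    Finset.sum_nonneg fun i _ => Finset.sum_nonneg fun j _ => sq_nonneg _
  have hρ0 : ∀ σ, 0 ≤ ρ σ := fun σ => Real.sqrt_nonneg _
  have hgX0 : g 0 = 0 := by
    simp [hg_def, hX0]
  have hgcont : ContinuousOn g (Icc (0:ℝ) t) := by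
    apply continuousOn_finset_sum
    intro i _
    apply continuousOn_finset_sum
    intro j _
    exact (hXcont i j).pow 2
  have hρcont : ContinuousOn ρ (Icc (0:ℝ) t) := by
    apply Real.continuous_sqrt.comp_continuousOn
    apply continuousOn_finset_sum
    intro i _
    exact continuousOn_finset_sum _ fun j _ => (hRcont i j).pow 2
  -- derivative of g
  set D : ℝ → ℝ := fun τ => ∑ i, ∑ j, 2 * X τ i j * ((-(X τ * A τ) + R τ) i j) with hD_def
  have hgderiv : ∀ τ ∈ Ioo (0:ℝ) t, HasDerivAt g (D τ) τ := by
    intro τ hτ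
    apply HasDerivAt.fun_sum
    intro i _
    apply HasDerivAt.fun_sum
    intro j _
    have h := (hXderiv τ hτ i j).mul (hXderiv τ hτ i j)
    have hf : (fun y => X y i j ^ 2) = fun y => X y i j * X y i j := by
      funext y; ring
    rw [hf]
    exact h.congr_deriv (by ring)
  -- key differential inequality for g
  have hDle : ∀ τ ∈ Ioo (0:ℝ) t,
      D τ ≤ -2 * c * g τ + 2 * Real.sqrt (g τ) * ρ τ := by
    intro τ hτ
    have hτ' : τ ∈ Icc (0:ℝ) t := Ioo_subset_Icc_self hτ
    have h1 : D τ = -2 * (∑ i, ∑ j, X τ i j * (X τ * A τ) i j)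
        + 2 * (∑ i, ∑ j, X τ i j * R τ i j) := by
      simp only [hD_def]
      rw [Finset.mul_sum, Finset.mul_sum, ← Finset.sum_add_distrib]
      refine Finset.sum_congr rfl fun i _ => ?_
      rw [Finset.mul_sum, Finset.mul_sum, ← Finset.sum_add_distrib]
      refine Finset.sum_congr rfl fun j _ => ?_
      simp only [Matrix.add_apply, Matrix.neg_apply]
      ring
    have h2 : c * g τ ≤ ∑ i, ∑ j, X τ i j * (X τ * A τ) i j := by
      rw [hg_def, Finset.mul_sum]
      apply Finset.sum_le_sum
      intro i _
      have := hA τ hτ' (fun j => X τ i j)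
      refine le_trans this (le_of_eq ?_)
      rw [Finset.sum_comm]
      apply Finset.sum_congr rfl
      intro j _
      rw [Matrix.mul_apply, Finset.mul_sum]
      apply Finset.sum_congr rfl
      intro k _
      ring
    have h3 : (∑ i, ∑ j, X τ i j * R τ i j) ≤ Real.sqrt (g τ) * ρ τ := by
      have hcs := Finset.sum_mul_sq_le_sq_mul_sq Finset.univ
        (fun p : Fin N × Fin N => X τ p.1 p.2) (fun p : Fin N × Fin N => R τ p.1 p.2)
      have e1 : (∑ i, ∑ j, X τ i j * R τ i j)
          = ∑ p : Fin N × Fin N, X τ p.1 p.2 * R τ p.1 p.2 :=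
        by rw [Fintype.sum_prod_type]
      have e2 : g τ = ∑ p : Fin N × Fin N, (X τ p.1 p.2) ^ 2 :=
        by rw [Fintype.sum_prod_type]
      have e3 : (∑ i, ∑ j, (R τ i j) ^ 2) = ∑ p : Fin N × Fin N, (R τ p.1 p.2) ^ 2 :=
        by rw [Fintype.sum_prod_type]
      calc (∑ i, ∑ j, X τ i j * R τ i j)
          ≤ Real.sqrt ((∑ i, ∑ j, X τ i j * R τ i j) ^ 2) := by
            rw [Real.sqrt_sq_eq_abs]; exact le_abs_self _
        _ ≤ Real.sqrt (g τ * (∑ i, ∑ j, (R τ i j) ^ 2)) := by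
            apply Real.sqrt_le_sqrt
            rw [e1, e2, e3]; exact hcs
        _ = Real.sqrt (g τ) * ρ τ := by
            rw [Real.sqrt_mul (hg0 τ)]; rfl
    rw [h1]
    have := mul_le_mul_of_nonpos_left h2 (by norm_num : (-2:ℝ) ≤ 0)
    nlinarith [h3]
  -- interval-integrability facts
  have hsub : ∀ τ ∈ Icc (0:ℝ) t, uIcc (0:ℝ) τ ⊆ Icc (0:ℝ) t := by
    intro τ hτ
    rw [uIcc_of_le hτ.1]
    exact Icc_subset_Icc le_rfl hτ.2
  -- main ε-bound
  intro τ hτ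
  have hEneg : ∀ s : ℝ, Real.exp (-(c * (τ - s))) = Real.exp (-(c*τ)) * Real.exp (c*s) := by
    intro s
    rw [← Real.exp_add]
    ring_nf
  have hρint : ∀ τ' ∈ Icc (0:ℝ) t, IntervalIntegrable (fun σ => Real.exp (c*σ) * ρ σ) MeasureTheory.volume 0 τ' := by
    intro τ' hτ'
    apply ContinuousOn.intervalIntegrable
    apply ContinuousOn.mono _ (hsub τ' hτ')
    exact ((Real.continuous_exp.comp (continuous_const.mul continuous_id)).continuousOn).mul hρcont
  have hexpint : ∀ τ' : ℝ, IntervalIntegrable (fun σ => Real.exp (c*σ)) MeasureTheory.volume 0 τ' := by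
    intro τ'
    exact (Real.continuous_exp.comp (continuous_const.mul continuous_id)).intervalIntegrable 0 τ'
  have key : ∀ ε : ℝ, 0 < ε →
      Real.sqrt (g τ) ≤ (∫ s in (0:ℝ)..τ, Real.exp (-(c * (τ - s))) * ρ s)
        + ε * (Real.exp (-(c*τ)) * (1 + c * ∫ σ in (0:ℝ)..τ, Real.exp (c*σ))) := by
    intro ε hε
    set fε : ℝ → ℝ := fun s => Real.sqrt (g s + ε^2) with hfε_def
    have hfεpos : ∀ s, 0 < fε s := by
      intro s
      apply Real.sqrt_pos.mpr
      have := hg0 s; positivity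
    have hfεge : ∀ s, ε ≤ fε s := by
      intro s
      have : Real.sqrt (ε^2) ≤ fε s := Real.sqrt_le_sqrt (by linarith [hg0 s])
      rwa [Real.sqrt_sq hε.le] at this
    have hfεgeg : ∀ s, Real.sqrt (g s) ≤ fε s := fun s =>
      Real.sqrt_le_sqrt (by nlinarith)
    have hfεcont : ContinuousOn fε (Icc (0:ℝ) t) :=
      Real.continuous_sqrt.comp_continuousOn (hgcont.add continuousOn_const)
    have hfεderiv : ∀ s ∈ Ioo (0:ℝ) t,
        HasDerivAt fε (D s / (2 * fε s)) s := by
      intro s hs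
      exact ((hgderiv s hs).add_const (ε^2)).sqrt (by have := hg0 s; positivity)
    have hfεbound : ∀ s ∈ Ioo (0:ℝ) t,
        D s / (2 * fε s) ≤ -c * fε s + ρ s + c * ε := by
      intro s hs
      have hD := hDle s hs
      have hf := hfεpos s
      have h2f : 0 < 2 * fε s := by linarith
      rw [div_le_iff₀ h2f]
      have hsq : fε s ^ 2 = g s + ε ^ 2 := Real.sq_sqrt (by have := hg0 s; positivity)
      have hsg : Real.sqrt (g s) ≤ fε s := hfεgeg s
      have hgs : Real.sqrt (g s) ^ 2 = g s := Real.sq_sqrt (hg0 s)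
      nlinarith [hρ0 s, hfεge s, Real.sqrt_nonneg (g s),
        mul_le_mul_of_nonneg_right hsg (hρ0 s),
        mul_le_mul_of_nonneg_left (hfεge s) (mul_pos hc hε).le]
    -- the auxiliary function
    set h : ℝ → ℝ := fun σ => Real.exp (c*σ) * (ρ σ + c * ε) with hh_def
    have hhcont : ContinuousOn h (Icc (0:ℝ) t) :=
      ((Real.continuous_exp.comp (continuous_const.mul continuous_id)).continuousOn).mul
        (hρcont.add continuousOn_const)
    have hhint : ∀ τ' ∈ Icc (0:ℝ) t, IntervalIntegrable h MeasureTheory.volume 0 τ' := by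
      intro τ' hτ'
      exact (hhcont.mono (hsub τ' hτ')).intervalIntegrable
    set φ : ℝ → ℝ := fun s => Real.exp (c*s) * fε s - ∫ σ in (0:ℝ)..s, h σ with hφ_def
    have hφcont : ContinuousOn φ (Icc (0:ℝ) t) := by
      apply ContinuousOn.sub
      · exact ((Real.continuous_exp.comp (continuous_const.mul continuous_id)).continuousOn).mul hfεcont
      · have huicc : uIcc (0:ℝ) t = Icc 0 t := uIcc_of_le ht.le
        have hint : MeasureTheory.IntegrableOn h (uIcc (0:ℝ) t) MeasureTheory.volume := by
          rw [huicc]; exact hhcont.integrableOn_compact isCompact_Icc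
        have h2 := intervalIntegral.continuousOn_primitive_interval
          (μ := MeasureTheory.volume) (f := h) (a := 0) (b := t) hint
        rwa [huicc] at h2
    have hφderiv : ∀ s ∈ Ioo (0:ℝ) t,
        HasDerivAt φ (Real.exp (c*s) * (c * fε s + D s / (2 * fε s)) - h s) s := by
      intro s hs
      have h1 : HasDerivAt (fun u => Real.exp (c*u) * fε u)
          (c * Real.exp (c*s) * fε s + Real.exp (c*s) * (D s / (2 * fε s))) s := by
        have he : HasDerivAt (fun u => Real.exp (c*u)) (c * Real.exp (c*s)) s := by
          have hcomp := (Real.hasDerivAt_exp (c*s)).comp s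
            ((hasDerivAt_id s).const_mul c)
          simpa [Function.comp_def, mul_comm] using hcomp
        exact he.mul (hfεderiv s hs)
      have h2 : HasDerivAt (fun u => ∫ σ in (0:ℝ)..u, h σ) (h s) s := by
        apply intervalIntegral.integral_hasDerivAt_right
          (hhint s (Ioo_subset_Icc_self hs))
        · exact (ContinuousOn.stronglyMeasurableAtFilter isOpen_Ioo
            (hhcont.mono Ioo_subset_Icc_self) s hs)
        · exact (hhcont s (Ioo_subset_Icc_self hs)).continuousAt
            (Icc_mem_nhds hs.1 hs.2)
      exact (h1.sub h2).congr_deriv (by ring)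
    have hφanti : AntitoneOn φ (Icc (0:ℝ) t) := by
      apply antitoneOn_of_deriv_nonpos (convex_Icc 0 t) hφcont
      · rw [interior_Icc]
        intro s hs
        exact (hφderiv s hs).differentiableAt.differentiableWithinAt
      · rw [interior_Icc]
        intro s hs
        rw [(hφderiv s hs).deriv]
        have hb := hfεbound s hs
        have hexp : (0:ℝ) < Real.exp (c*s) := Real.exp_pos _
        have : c * fε s + D s / (2 * fε s) ≤ ρ s + c * ε := by linarith
        have := mul_le_mul_of_nonneg_left this hexp.le
        simp only [hh_def]
        linarith
    have hφ0 : φ 0 = ε := by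
      simp [hφ_def, hfε_def, hgX0, Real.sqrt_sq hε.le]
    have hφτ : φ τ ≤ ε := by
      rw [← hφ0]
      exact hφanti (left_mem_Icc.mpr (le_trans hτ.1 hτ.2)) hτ hτ.1
    -- unfold φ τ ≤ ε
    have hint_split : (∫ σ in (0:ℝ)..τ, h σ)
        = (∫ σ in (0:ℝ)..τ, Real.exp (c*σ) * ρ σ) + c * ε * ∫ σ in (0:ℝ)..τ, Real.exp (c*σ) := by
      have : (∫ σ in (0:ℝ)..τ, h σ)
          = (∫ σ in (0:ℝ)..τ, (Real.exp (c*σ) * ρ σ + c * ε * Real.exp (c*σ))) := by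
        apply intervalIntegral.integral_congr
        intro σ _
        simp only [hh_def]; ring
      rw [this, intervalIntegral.integral_add (hρint τ hτ) ((hexpint τ).const_mul (c*ε)),
        intervalIntegral.integral_const_mul]
    have hmain : Real.exp (c*τ) * fε τ ≤ ε + (∫ σ in (0:ℝ)..τ, Real.exp (c*σ) * ρ σ)
        + c * ε * ∫ σ in (0:ℝ)..τ, Real.exp (c*σ) := by
      have := hφτ
      simp only [hφ_def] at this
      rw [hint_split] at this
      linarith
    have hrhs : (∫ s in (0:ℝ)..τ, Real.exp (-(c * (τ - s))) * ρ s)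
        = Real.exp (-(c*τ)) * ∫ σ in (0:ℝ)..τ, Real.exp (c*σ) * ρ σ := by
      rw [← intervalIntegral.integral_const_mul]
      apply intervalIntegral.integral_congr
      intro σ _
      simp only
      rw [hEneg σ]; ring
    have hexpτ : (0:ℝ) < Real.exp (-(c*τ)) := Real.exp_pos _
    have hfin : fε τ ≤ Real.exp (-(c*τ)) * (ε + (∫ σ in (0:ℝ)..τ, Real.exp (c*σ) * ρ σ)
        + c * ε * ∫ σ in (0:ℝ)..τ, Real.exp (c*σ)) := by
      have hecτ : Real.exp (-(c*τ)) * Real.exp (c*τ) = 1 := by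
        rw [← Real.exp_add]; ring_nf; exact Real.exp_zero
      have := mul_le_mul_of_nonneg_left hmain hexpτ.le
      calc fε τ = Real.exp (-(c*τ)) * (Real.exp (c*τ) * fε τ) := by
            rw [← mul_assoc, hecτ, one_mul]
        _ ≤ _ := this
    calc Real.sqrt (g τ) ≤ fε τ := hfεgeg τ
      _ ≤ _ := hfin
      _ = (∫ s in (0:ℝ)..τ, Real.exp (-(c * (τ - s))) * ρ s)
          + ε * (Real.exp (-(c*τ)) * (1 + c * ∫ σ in (0:ℝ)..τ, Real.exp (c*σ))) := by
          rw [hrhs]; ring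
  -- pass to the limit ε → 0
  have hKpos : 0 < Real.exp (-(c*τ)) * (1 + c * ∫ σ in (0:ℝ)..τ, Real.exp (c*σ)) := by
    have hint : 0 ≤ ∫ σ in (0:ℝ)..τ, Real.exp (c*σ) :=
      intervalIntegral.integral_nonneg hτ.1 (fun σ _ => (Real.exp_pos _).le)
    have : (0:ℝ) < 1 + c * ∫ σ in (0:ℝ)..τ, Real.exp (c*σ) := by positivity
    positivity
  have hfrob : frobNorm (X τ) = Real.sqrt (g τ) := rfl
  rw [hfrob]
  refine le_of_forall_pos_le_add ?_
  intro δ hδ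
  set K := Real.exp (-(c*τ)) * (1 + c * ∫ σ in (0:ℝ)..τ, Real.exp (c*σ)) with hK
  have := key (δ / K) (div_pos hδ hKpos)
  calc Real.sqrt (g τ) ≤ (∫ s in (0:ℝ)..τ, Real.exp (-(c * (τ - s))) * ρ s) + (δ / K) * K := this
    _ = (∫ s in (0:ℝ)..τ, Real.exp (-(c * (τ - s))) * ρ s) + δ := by
        rw [div_mul_cancel₀ _ (ne_of_gt hKpos)]
end

section
/- Let 0 < γ₁ ≤ γ < 1. Let f : ℝ → ℝ be differentiable and 2π-periodic, and set H := sup_{x ≠ y} |f′(x) − f′(y)| / |x − y|^{γ₁}. For α ∈ ℝ with sin(α/2) ≠ 0 define the modified difference quotient Δ̃_α f(x) := (1/2)·cot(α/2)·(f(x) − f(x − α)). Then there exists a constant C depending only on γ and γ₁ such that for every x ∈ ℝ, every α ∈ (0, π), and every h ∈ [α/2, α/2 + 2π] with h ≠ α and sin(h/2) ≠ 0: |Δ̃_α f(x) − Δ̃_h f(x)| ≤ C H |α − h|^γ / α^{γ−γ₁}. -/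
open Set

lemma aux_sin_lb {u : ℝ} (h0 : 0 ≤ u) (h1 : u ≤ 3 * Real.pi / 4) :
    u / 4 ≤ Real.sin u := by
  have hπ4 : Real.pi ≤ 4 := Real.pi_le_four
  have hπ3 : (3:ℝ) < Real.pi := Real.pi_gt_three
  rcases le_or_gt u (Real.pi / 2) with hu | hu
  · have hms := Real.mul_le_sin h0 hu
    have hπ0 : (0:ℝ) < Real.pi := Real.pi_pos
    have hhalf : (1:ℝ)/2 ≤ 2/Real.pi := by rw [le_div_iff₀ hπ0]; nlinarith
    nlinarith [mul_le_mul_of_nonneg_left hhalf h0]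
  · have h2 : Real.sin u = Real.sin (Real.pi - u) := (Real.sin_pi_sub u).symm
    have hmem1 : Real.pi / 4 ∈ Set.Icc (-(Real.pi/2)) (Real.pi/2) := by
      constructor <;> nlinarith
    have hmem2 : Real.pi - u ∈ Set.Icc (-(Real.pi/2)) (Real.pi/2) := by
      constructor <;> nlinarith
    have hmono := Real.strictMonoOn_sin.monotoneOn hmem1 hmem2 (by nlinarith)
    rw [Real.sin_pi_div_four] at hmono
    have hs2 : (1.41 : ℝ) ≤ Real.sqrt 2 := by
      rw [show (1.41:ℝ) = Real.sqrt (1.41^2) from (Real.sqrt_sq (by norm_num)).symm]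
      exact Real.sqrt_le_sqrt (by norm_num)
    have hπ15 : Real.pi < 3.15 := Real.pi_lt_d2
    nlinarith

lemma aux_sin_ge_mul_cos {s : ℝ} (h0 : 0 ≤ s) (h1 : s ≤ Real.pi / 2) :
    s * Real.cos s ≤ Real.sin s := by
  rcases eq_or_lt_of_le h0 with rfl | hs0
  · simp
  rcases eq_or_lt_of_le h1 with rfl | hs1
  · simp [Real.cos_pi_div_two]
  · have hcos : 0 < Real.cos s := Real.cos_pos_of_mem_Ioo ⟨by linarith, hs1⟩
    have htan := Real.lt_tan hs0 hs1
    rw [Real.tan_eq_sin_div_cos] at htan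
    calc s * Real.cos s ≤ (Real.sin s / Real.cos s) * Real.cos s := by
          apply mul_le_mul_of_nonneg_right htan.le hcos.le
      _ = Real.sin s := by field_simp

lemma aux_one_sub_cos {s : ℝ} : 1 - Real.cos s ≤ s^2/2 := by
  nlinarith [Real.one_sub_sq_div_two_le_cos (x := s)]

lemma aux_sub_sin {t : ℝ} (h0 : 0 ≤ t) (h1 : t ≤ 3 * Real.pi / 2) :
    t - Real.sin t ≤ t^3 / 4 := by
  have hπ3 : (3:ℝ) < Real.pi := Real.pi_gt_three
  set s := t/2 with hs
  have hs0 : 0 ≤ s := by positivity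
  have hs1 : s ≤ 3 * Real.pi / 4 := by rw [hs]; linarith
  have hsπ : s ≤ Real.pi := by linarith
  have hsin_nonneg : 0 ≤ Real.sin s := Real.sin_nonneg_of_nonneg_of_le_pi hs0 hsπ
  have p1 : s - Real.sin s ≤ s^3/2 := by
    rcases le_or_gt s (Real.pi/2) with h | h
    · have := aux_sin_ge_mul_cos hs0 h
      have := aux_one_sub_cos (s := s)
      nlinarith
    · have hs32 : (3:ℝ)/2 < s := by linarith
      have h2s : (2:ℝ) < s^2 := by nlinarith [mul_lt_mul'' hs32 hs32 (by norm_num) (by norm_num)]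
      have h3 := mul_lt_mul_of_pos_left h2s (show (0:ℝ) < s by linarith)
      nlinarith
  have p2 : Real.sin s * (1 - Real.cos s) ≤ s^3/2 := by
    have hsin_le : Real.sin s ≤ s := Real.sin_le hs0
    have h2 := aux_one_sub_cos (s := s)
    have hc1 : Real.cos s ≤ 1 := Real.cos_le_one s
    nlinarith
  have hst : Real.sin t = 2 * Real.sin s * Real.cos s := by
    rw [show t = 2 * s by rw [hs]; ring, Real.sin_two_mul]
  rw [hst]
  have : t = 2 * s := by rw [hs]; ring
  rw [this]
  nlinarith

set_option maxHeartbeats 16000000 in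
/-- Hölder continuity in `α` of the periodic modified difference quotient
`Δ̃_α f(x) = (1/2)cot(α/2)(f(x) − f(x−α))`. -/
theorem periodic_difference_quotient_holder
    (γ γ₁ : ℝ) (h1 : 0 < γ₁) (h2 : γ₁ ≤ γ) (h3 : γ < 1) :
    ∃ C : ℝ, 0 < C ∧
      ∀ (f : ℝ → ℝ) (H : ℝ),
        Differentiable ℝ f →
        Function.Periodic f (2 * Real.pi) →
        (∀ x y : ℝ, x ≠ y → |deriv f x - deriv f y| ≤ H * |x - y| ^ γ₁) →
        ∀ x : ℝ, ∀ α ∈ Ioo (0 : ℝ) Real.pi,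
          ∀ h ∈ Icc (α / 2) (α / 2 + 2 * Real.pi), h ≠ α → Real.sin (h / 2) ≠ 0 →
            |(1 / 2) * (Real.cos (α / 2) / Real.sin (α / 2)) * (f x - f (x - α)) -
                (1 / 2) * (Real.cos (h / 2) / Real.sin (h / 2)) * (f x - f (x - h))| ≤
              C * H * |α - h| ^ γ / α ^ (γ - γ₁) := by
  have hπ : (0:ℝ) < Real.pi := Real.pi_pos
  have hπ4 : Real.pi ≤ 4 := Real.pi_le_four
  have hπ3 : (3:ℝ) < Real.pi := Real.pi_gt_three
  have hπ15 : Real.pi < 3.15 := Real.pi_lt_d2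
  have hγ0 : 0 < γ := lt_of_lt_of_le h1 h2
  have hγ₁1 : γ₁ ≤ 1 := by linarith
  refine ⟨1000, by norm_num, ?_⟩
  intro f H hdiff hper hHol x α hα h hhI hne hsinh
  obtain ⟨hα0, hαπ⟩ := hα
  obtain ⟨hh1, hh2⟩ := hhI
  set A := deriv f x with hA_def
  -- H is nonneg
  have hH : 0 ≤ H := by
    have hxx : x ≠ x + 1 := by intro e; nlinarith [congrArg (fun y : ℝ => y - x) e]
    have := hHol x (x + 1) hxx
    have habs : |x - (x+1)| = 1 := by rw [show x - (x+1) = -1 by ring]; norm_num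
    rw [habs, Real.one_rpow, mul_one] at this
    exact le_trans (abs_nonneg _) this
  -- Hölder allowing equal points
  have hHol' : ∀ y z : ℝ, |deriv f y - deriv f z| ≤ H * |y - z| ^ γ₁ := by
    intro y z
    rcases eq_or_ne y z with rfl | hyz
    · simp [Real.zero_rpow (ne_of_gt h1)]
    · exact hHol y z hyz
  -- derivative is periodic
  have hperd : Function.Periodic (deriv f) (2 * Real.pi) := by
    intro y
    have he : (fun u : ℝ => f (u + 2 * Real.pi)) = f := funext hper
    conv_rhs => rw [← he]
    rw [deriv_comp_add_const]
  -- a zero of the derivative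
  obtain ⟨c, hcmem, hc0⟩ : ∃ c ∈ Ioo (0:ℝ) (2 * Real.pi), deriv f c = 0 := by
    obtain ⟨c, hc, hceq⟩ := exists_deriv_eq_slope f (by linarith : (0:ℝ) < 2 * Real.pi)
      (hdiff.continuous.continuousOn) (hdiff.differentiableOn)
    refine ⟨c, hc, ?_⟩
    rw [hceq]
    have hf2π : f (2 * Real.pi) = f 0 := by simpa using hper 0
    simp [hf2π]
  -- the derivative is bounded by π * H
  have hAb : ∀ y : ℝ, |deriv f y| ≤ Real.pi * H := by
    intro y
    obtain ⟨k, hk⟩ : ∃ k : ℤ, |(y - c) / (2 * Real.pi) - (k:ℝ)| ≤ 1/2 :=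
      ⟨round ((y - c) / (2 * Real.pi)), abs_sub_round _⟩
    have hdz : deriv f (c + (k:ℝ) * (2 * Real.pi)) = 0 := by
      rw [(hperd.int_mul k) c]; exact hc0
    have hyz : |y - (c + (k:ℝ) * (2 * Real.pi))| ≤ Real.pi := by
      have he : y - (c + (k:ℝ) * (2 * Real.pi))
          = ((y - c) / (2 * Real.pi) - (k:ℝ)) * (2 * Real.pi) := by
        field_simp; ring
      rw [he, abs_mul, abs_of_pos (by linarith : (0:ℝ) < 2 * Real.pi)]
      nlinarith
    rcases eq_or_ne y (c + (k:ℝ) * (2 * Real.pi)) with he | hyzne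
    · rw [he, hdz]; simpa using mul_nonneg hπ.le hH
    · have hyy := hHol y (c + (k:ℝ) * (2 * Real.pi)) hyzne
      rw [hdz, sub_zero] at hyy
      refine le_trans hyy ?_
      have h1' : |y - (c + (k:ℝ) * (2 * Real.pi))| ^ γ₁ ≤ Real.pi ^ γ₁ :=
        Real.rpow_le_rpow (abs_nonneg _) hyz h1.le
      have h2' : Real.pi ^ γ₁ ≤ Real.pi := by
        calc Real.pi ^ γ₁ ≤ Real.pi ^ (1:ℝ) :=
              Real.rpow_le_rpow_of_exponent_le (by linarith) hγ₁1
          _ = Real.pi := Real.rpow_one _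
      calc H * |y - (c + (k:ℝ) * (2 * Real.pi))| ^ γ₁ ≤ H * Real.pi := by
            apply mul_le_mul_of_nonneg_left (le_trans h1' h2') hH
        _ = Real.pi * H := mul_comm _ _
  -- Taylor-type bound
  have hF : ∀ s : ℝ, |f x - f (x - s) - s * A| ≤ H * |s| ^ γ₁ * |s| := by
    intro s
    have hd : ∀ u ∈ uIcc x (x - s),
        HasDerivWithinAt (fun u => f u - A * u) (deriv f u - A) (uIcc x (x - s)) u := by
      intro u _
      have : HasDerivAt (fun u => f u - A * u) (deriv f u - A) u := by
        exact ((hdiff u).hasDerivAt.sub ((hasDerivAt_id u).const_mul A)).congr_deriv (by simp)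
      exact this.hasDerivWithinAt
    have hb : ∀ u ∈ uIcc x (x - s), ‖deriv f u - A‖ ≤ H * |s| ^ γ₁ := by
      intro u hu
      have hux : |u - x| ≤ |s| := by
        rcases Set.mem_uIcc.mp hu with ⟨ha, hb⟩ | ⟨ha, hb⟩ <;>
          refine abs_le.mpr ⟨?_, ?_⟩ <;>
            [skip; skip; skip; skip] <;>
            nlinarith [le_abs_self s, neg_abs_le s]
      have := hHol' u x
      refine le_trans this ?_
      exact mul_le_mul_of_nonneg_left (Real.rpow_le_rpow (abs_nonneg _) hux h1.le) hH
    have key := Convex.norm_image_sub_le_of_norm_hasDerivWithin_le hd hb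
      (convex_uIcc x (x - s)) (left_mem_uIcc) (right_mem_uIcc)
    have he1 : (fun u => f u - A * u) (x - s) - (fun u => f u - A * u) x
        = -(f x - f (x - s) - s * A) := by simp; ring
    have he2 : (x - s) - x = -s := by ring
    rw [Real.norm_eq_abs, Real.norm_eq_abs, he1, he2, abs_neg, abs_neg] at key
    exact key
  -- the modified difference quotient as a function of the increment
  set g : ℝ → ℝ := fun t => 1/2 * (Real.cos (t/2) / Real.sin (t/2)) * (f x - f (x - t))
    with hg_def
  set g' : ℝ → ℝ := fun t => -(f x - f (x - t)) / (4 * Real.sin (t/2)^2)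
      + 1/2 * (Real.cos (t/2) / Real.sin (t/2)) * deriv f (x - t)
    with hg'_def
  have hFdiff : ∀ t : ℝ, HasDerivAt (fun u : ℝ => f x - f (x - u)) (deriv f (x - t)) t := by
    intro t
    have hinner : HasDerivAt (fun u : ℝ => x - u) (-1) t := by
      exact ((hasDerivAt_const t x).sub (hasDerivAt_id t)).congr_deriv (by simp)
    have hcomp := HasDerivAt.comp t (hdiff (x - t)).hasDerivAt hinner
    have := (hasDerivAt_const t (f x)).sub hcomp
    exact this.congr_deriv (by simp)
  have hgderiv : ∀ t : ℝ, Real.sin (t/2) ≠ 0 → HasDerivAt g (g' t) t := by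
    intro t hst
    have hhalf : HasDerivAt (fun u : ℝ => u/2) (1/2) t := (hasDerivAt_id t).div_const 2
    have hcos : HasDerivAt (fun u : ℝ => Real.cos (u/2)) (-Real.sin (t/2) * (1/2)) t := hhalf.cos
    have hsin : HasDerivAt (fun u : ℝ => Real.sin (u/2)) (Real.cos (t/2) * (1/2)) t := hhalf.sin
    have hq := hcos.div hsin hst
    have hmul := (hq.const_mul (1/2 : ℝ)).mul (hFdiff t)
    refine hmul.congr_deriv ?_
    have hpyth : Real.sin (t/2)^2 + Real.cos (t/2)^2 = 1 := Real.sin_sq_add_cos_sq _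
    rw [hg'_def]
    simp only [Pi.div_apply]
    have hnum : -Real.sin (t/2) * (1/2) * Real.sin (t/2)
        - Real.cos (t/2) * (Real.cos (t/2) * (1/2)) = -(1/2) := by
      linear_combination (-(1:ℝ)/2) * hpyth
    rw [hnum]
    ring
  have hg'bound : ∀ t : ℝ, 0 < t → t ≤ 3 * Real.pi / 2 → |g' t| ≤ 340 * H * t ^ (γ₁ - 1) := by
    intro t ht0 ht1
    have hs0 : 0 < Real.sin (t/2) :=
      Real.sin_pos_of_pos_of_lt_pi (by linarith) (by linarith)
    have hslb : t/8 ≤ Real.sin (t/2) := by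
      have := aux_sin_lb (u := t/2) (by linarith) (by linarith)
      linarith
    have hs2 : t^2/64 ≤ Real.sin (t/2)^2 := by nlinarith
    have hsin2 : Real.sin t = 2 * Real.sin (t/2) * Real.cos (t/2) := by
      have h2m := Real.sin_two_mul (t/2)
      rw [show 2 * (t/2) = t by ring] at h2m
      exact h2m
    have hphi : 1/2 * (Real.cos (t/2) / Real.sin (t/2))
        = Real.sin t / (4 * Real.sin (t/2)^2) := by
      rw [hsin2]
      field_simp
      ring
    have hrw : g' t = (-(f x - f (x - t) - t * A) + Real.sin t * (deriv f (x - t) - A)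
        + A * (Real.sin t - t)) / (4 * Real.sin (t/2)^2) := by
      simp only [hg'_def]
      rw [hphi]
      ring
    rw [hrw]
    have e1 : |f x - f (x - t) - t * A| ≤ H * t ^ γ₁ * t := by
      have he := hF t
      rwa [abs_of_pos ht0] at he
    have e2 : |Real.sin t * (deriv f (x - t) - A)| ≤ t * (H * t ^ γ₁) := by
      rw [abs_mul]
      have hsl : |Real.sin t| ≤ t := by
        have := Real.abs_sin_le_abs (x := t)
        rwa [abs_of_pos ht0] at this
      have hdl : |deriv f (x - t) - A| ≤ H * t ^ γ₁ := by
        have hd := hHol' (x - t) x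
        rwa [show x - t - x = -t by ring, abs_neg, abs_of_pos ht0] at hd
      exact mul_le_mul hsl hdl (abs_nonneg _) ht0.le
    have e3 : |A * (Real.sin t - t)| ≤ (Real.pi * H) * (t^3/4) := by
      rw [abs_mul]
      have h1' : |Real.sin t - t| ≤ t^3/4 := by
        have hle : Real.sin t ≤ t := Real.sin_le ht0.le
        have hsub := aux_sub_sin ht0.le ht1
        rw [abs_sub_comm, abs_of_nonneg (by linarith)]
        linarith
      exact mul_le_mul (hAb x) h1' (abs_nonneg _) (by positivity)
    have hnum : |(-(f x - f (x - t) - t * A) + Real.sin t * (deriv f (x - t) - A)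
        + A * (Real.sin t - t))| ≤ 2 * (H * t ^ γ₁ * t) + Real.pi * H * (t^3/4) := by
      calc |(-(f x - f (x - t) - t * A) + Real.sin t * (deriv f (x - t) - A)
            + A * (Real.sin t - t))|
          ≤ |(-(f x - f (x - t) - t * A) + Real.sin t * (deriv f (x - t) - A))|
            + |A * (Real.sin t - t)| := abs_add_le _ _
        _ ≤ |(-(f x - f (x - t) - t * A))| + |Real.sin t * (deriv f (x - t) - A)|
            + |A * (Real.sin t - t)| := by linarith [abs_add_le (-(f x - f (x - t) - t * A)) (Real.sin t * (deriv f (x - t) - A))]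
        _ ≤ 2 * (H * t ^ γ₁ * t) + Real.pi * H * (t^3/4) := by
            rw [abs_neg]
            nlinarith [e1, e2, e3]
    rw [abs_div, abs_of_pos (show (0:ℝ) < 4 * Real.sin (t/2)^2 by positivity)]
    have hdenpos : (0:ℝ) < 4 * (t^2/64) := by positivity
    have hdiv1 : |(-(f x - f (x - t) - t * A) + Real.sin t * (deriv f (x - t) - A)
        + A * (Real.sin t - t))| / (4 * Real.sin (t/2)^2)
        ≤ |(-(f x - f (x - t) - t * A) + Real.sin t * (deriv f (x - t) - A)
        + A * (Real.sin t - t))| / (4 * (t^2/64)) :=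
      div_le_div_of_nonneg_left (abs_nonneg _) hdenpos (by nlinarith [hs2])
    refine le_trans hdiv1 (le_trans ((div_le_div_iff_of_pos_right hdenpos).mpr hnum) ?_)
    rw [div_le_iff₀ hdenpos]
    have f1 : t ^ γ₁ * t = t ^ (γ₁-1) * t^2 := by
      have e : t ^ (γ₁ - 1) * t ^ (1:ℝ) = t ^ γ₁ := by
        rw [← Real.rpow_add ht0]; ring_nf
      rw [Real.rpow_one] at e
      rw [← e]; ring
    have hX : (0:ℝ) < t ^ (γ₁-1) * t^2 := by positivity
    have ht3 : t^3 ≤ 23 * (t ^ (γ₁-1) * t^2) := by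
      have e2' : t ^ (γ₁-1) * t ^ (2-γ₁) = t ^ (1:ℝ) := by
        rw [← Real.rpow_add ht0]; ring_nf
      rw [Real.rpow_one] at e2'
      have e3' : t ^ (2-γ₁) ≤ 23 := by
        rcases le_or_gt t 1 with hle | hlt
        · calc t ^ (2-γ₁) ≤ 1 := Real.rpow_le_one ht0.le hle (by linarith)
            _ ≤ 23 := by norm_num
        · calc t ^ (2-γ₁) ≤ t ^ (2:ℝ) :=
                Real.rpow_le_rpow_of_exponent_le hlt.le (by linarith)
            _ = t^2 := by
                rw [show (2:ℝ) = ((2:ℕ):ℝ) by norm_num, Real.rpow_natCast]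
            _ ≤ 23 := by nlinarith
      have hP : (0:ℝ) < t ^ (γ₁-1) := Real.rpow_pos_of_pos ht0 _
      calc t^3 = (t ^ (γ₁-1) * t ^ (2-γ₁)) * t^2 := by rw [e2']; ring
        _ ≤ (t ^ (γ₁-1) * 23) * t^2 := by
            have := mul_le_mul_of_nonneg_left e3' hP.le
            nlinarith [sq_nonneg t]
        _ = 23 * (t ^ (γ₁-1) * t^2) := by ring
    have ht3H : H * t^3 ≤ 23 * (H * (t ^ (γ₁-1) * t^2)) := by
      have := mul_le_mul_of_nonneg_left ht3 hH
      linarith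
    have hf1H : H * (t ^ γ₁ * t) = H * (t ^ (γ₁-1) * t^2) := by rw [f1]
    have hb0 : (0:ℝ) ≤ H * t^3 := mul_nonneg hH (by positivity)
    have hY0 : (0:ℝ) ≤ H * (t ^ (γ₁-1) * t^2) := mul_nonneg hH hX.le
    have hπb := mul_le_mul_of_nonneg_right hπ15.le hb0
    nlinarith [hf1H, ht3H, hπb, hY0]
  set D := |α - h| with hD_def
  have hD0 : 0 < D := by
    rw [hD_def]; exact abs_pos.mpr (sub_ne_zero.mpr (fun e => hne e.symm))
  have hDa : α - h ≤ D := by rw [hD_def]; exact le_abs_self _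
  have hDb : h - α ≤ D := by rw [hD_def, abs_sub_comm]; exact le_abs_self _
  have hsinα : Real.sin (α/2) ≠ 0 :=
    ne_of_gt (Real.sin_pos_of_pos_of_lt_pi (by linarith) (by linarith))
  suffices hmain : |g α - g h| ≤ 1000 * (H * (D ^ γ * α ^ (γ₁ - γ))) by
    have heq : (1000:ℝ) * H * D ^ γ / α ^ (γ - γ₁) = 1000 * (H * (D ^ γ * α ^ (γ₁ - γ))) := by
      rw [show γ₁ - γ = -(γ - γ₁) by ring, Real.rpow_neg hα0.le]
      field_simp
    calc |1 / 2 * (Real.cos (α / 2) / Real.sin (α / 2)) * (f x - f (x - α)) -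
          1 / 2 * (Real.cos (h / 2) / Real.sin (h / 2)) * (f x - f (x - h))|
        = |g α - g h| := by simp only [hg_def]
      _ ≤ 1000 * (H * (D ^ γ * α ^ (γ₁ - γ))) := hmain
      _ = 1000 * H * D ^ γ / α ^ (γ - γ₁) := heq.symm
  rcases le_or_gt D (α/2) with hcase | hcase
  · -- Case I : h is close to α; use the derivative bound
    have hmm : ∀ t ∈ uIcc α h, α/2 ≤ t ∧ t ≤ 3*Real.pi/2 := by
      intro t ht
      rcases Set.mem_uIcc.mp ht with ⟨ha', hb'⟩ | ⟨ha', hb'⟩ <;>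
        exact ⟨by nlinarith, by nlinarith⟩
    have hd : ∀ t ∈ uIcc α h, HasDerivWithinAt g (g' t) (uIcc α h) t := by
      intro t ht
      obtain ⟨hta, htb⟩ := hmm t ht
      have hsint : Real.sin (t/2) ≠ 0 :=
        ne_of_gt (Real.sin_pos_of_pos_of_lt_pi (by linarith) (by linarith))
      exact (hgderiv t hsint).hasDerivWithinAt
    have hbnd : ∀ t ∈ uIcc α h, ‖g' t‖ ≤ 340 * H * (α/2) ^ (γ₁ - 1) := by
      intro t ht
      obtain ⟨hta, htb⟩ := hmm t ht
      have hb1 := hg'bound t (by linarith) htb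
      have hb2 : t ^ (γ₁ - 1) ≤ (α/2) ^ (γ₁ - 1) :=
        Real.rpow_le_rpow_of_nonpos (by linarith) hta (by linarith)
      rw [Real.norm_eq_abs]
      calc |g' t| ≤ 340 * H * t ^ (γ₁ - 1) := hb1
        _ ≤ 340 * H * (α/2) ^ (γ₁ - 1) :=
            mul_le_mul_of_nonneg_left hb2 (by nlinarith)
    have key := Convex.norm_image_sub_le_of_norm_hasDerivWithin_le hd hbnd
      (convex_uIcc α h) (left_mem_uIcc) (right_mem_uIcc)
    rw [Real.norm_eq_abs, Real.norm_eq_abs] at key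
    have key2 : |g α - g h| ≤ 340 * H * (α/2) ^ (γ₁ - 1) * D := by
      rw [abs_sub_comm]
      rw [abs_sub_comm h α, ← hD_def] at key
      exact key
    have hp2 : (1:ℝ)/2 ≤ (2:ℝ) ^ (γ₁ - 1) := by
      have := Real.rpow_le_rpow_of_exponent_le (show (1:ℝ) ≤ 2 by norm_num)
        (show (-1:ℝ) ≤ γ₁ - 1 by linarith)
      rwa [Real.rpow_neg_one, show ((2:ℝ))⁻¹ = 1/2 by norm_num] at this
    have hsplit : (α/2) ^ (γ₁-1) * 2 ^ (γ₁-1) = α ^ (γ₁-1) := by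
      rw [← Real.mul_rpow (by positivity) (by norm_num)]
      norm_num
    have c1 : (α/2) ^ (γ₁-1) ≤ 2 * α ^ (γ₁-1) := by
      nlinarith [Real.rpow_pos_of_pos (show (0:ℝ) < α/2 by linarith) (γ₁-1), hsplit, hp2]
    have d1 : D ^ γ * D ^ (1-γ) = D := by
      rw [← Real.rpow_add hD0, show γ + (1-γ) = 1 by ring, Real.rpow_one]
    have d2 : D ^ (1-γ) ≤ α ^ (1-γ) :=
      Real.rpow_le_rpow hD0.le (by linarith) (by linarith)
    have d3 : α ^ (γ₁-1) * α ^ (1-γ) = α ^ (γ₁-γ) := by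
      rw [← Real.rpow_add hα0, show γ₁ - 1 + (1-γ) = γ₁ - γ by ring]
    have c2 : α ^ (γ₁-1) * D ≤ D ^ γ * α ^ (γ₁-γ) := by
      calc α ^ (γ₁-1) * D = α ^ (γ₁-1) * (D ^ γ * D ^ (1-γ)) := by rw [d1]
        _ ≤ α ^ (γ₁-1) * (D ^ γ * α ^ (1-γ)) := by
            apply mul_le_mul_of_nonneg_left _ (Real.rpow_pos_of_pos hα0 _).le
            exact mul_le_mul_of_nonneg_left d2 (Real.rpow_pos_of_pos hD0 _).le
        _ = D ^ γ * α ^ (γ₁-γ) := by rw [← d3]; ring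
    refine le_trans key2 ?_
    have hc1D : 340 * H * (α/2) ^ (γ₁-1) * D ≤ 340 * H * (2 * α ^ (γ₁-1)) * D := by
      have := mul_le_mul_of_nonneg_left c1 (show (0:ℝ) ≤ 340 * H by linarith)
      exact mul_le_mul_of_nonneg_right this hD0.le
    refine le_trans hc1D ?_
    have hc2D : 680 * H * (α ^ (γ₁-1) * D) ≤ 680 * H * (D ^ γ * α ^ (γ₁-γ)) :=
      mul_le_mul_of_nonneg_left c2 (by linarith)
    calc 340 * H * (2 * α ^ (γ₁-1)) * D = 680 * H * (α ^ (γ₁-1) * D) := by ring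
      _ ≤ 680 * H * (D ^ γ * α ^ (γ₁-γ)) := hc2D
      _ ≤ 1000 * (H * (D ^ γ * α ^ (γ₁-γ))) := by
          have h0 : (0:ℝ) ≤ H * (D ^ γ * α ^ (γ₁-γ)) :=
            mul_nonneg hH (mul_nonneg (Real.rpow_pos_of_pos hD0 _).le
              (Real.rpow_pos_of_pos hα0 _).le)
          nlinarith
  · -- Case II : h is far from α
    have hα2D : α ≤ 2*D := by linarith
    set M : ℝ → ℝ := fun u => u * (1/2 * (Real.cos (u/2) / Real.sin (u/2))) with hM_def
    -- pointwise comparison with the linearization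
    have hpt : ∀ u : ℝ, u ≠ 0 → |u| ≤ Real.pi →
        |g u - A * M (|u|)| ≤ 4 * H * |u| ^ γ₁ := by
      intro u hu0 huπ
      have habs : 0 < |u| := abs_pos.mpr hu0
      have hsl : |u|/4 ≤ |Real.sin (u/2)| := by
        have hm := Real.mul_abs_le_abs_sin (x := u/2)
          (by rw [abs_div, abs_two]; linarith)
        rw [abs_div, abs_two] at hm
        have h2π'' : (1:ℝ)/2 ≤ 2/Real.pi := by
          rw [le_div_iff₀ hπ]; nlinarith
        nlinarith [mul_le_mul_of_nonneg_left h2π'' (show (0:ℝ) ≤ |u|/2 by positivity)]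
      have hsin0 : Real.sin (u/2) ≠ 0 := by
        intro e; rw [e] at hsl; simp at hsl; linarith
      have heven : u * (1/2 * (Real.cos (u/2) / Real.sin (u/2))) = M (|u|) := by
        simp only [hM_def]
        rcases le_or_gt 0 u with hu | hu
        · rw [abs_of_nonneg hu]
        · rw [abs_of_neg hu, show -u/2 = -(u/2) by ring, Real.cos_neg, Real.sin_neg,
            div_neg]
          ring
      have hid : g u - A * M (|u|)
          = (1/2 * (Real.cos (u/2) / Real.sin (u/2))) * (f x - f (x - u) - u * A) := by
        rw [← heven]
        simp only [hg_def]
        ring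
      rw [hid, abs_mul]
      have hφ : |1/2 * (Real.cos (u/2) / Real.sin (u/2))| ≤ 1/(2*(|u|/4)) := by
        rw [show (1:ℝ)/2 * (Real.cos (u/2) / Real.sin (u/2))
            = Real.cos (u/2) / (2 * Real.sin (u/2)) by ring]
        rw [abs_div, abs_mul, abs_two]
        exact div_le_div₀ (by norm_num) (Real.abs_cos_le_one _) (by positivity)
          (by linarith)
      have hstep : |1/2 * (Real.cos (u/2) / Real.sin (u/2))| * |f x - f (x - u) - u * A|
          ≤ (1/(2*(|u|/4))) * (H * |u| ^ γ₁ * |u|) :=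
        mul_le_mul hφ (hF u) (abs_nonneg _) (by positivity)
      have hcalc : (1/(2*(|u|/4))) * (H * |u| ^ γ₁ * |u|) = 2 * (H * |u| ^ γ₁) := by
        field_simp
        ring
      rw [hcalc] at hstep
      have hr0 : 0 ≤ H * |u| ^ γ₁ := mul_nonneg hH (Real.rpow_pos_of_pos habs _).le
      nlinarith
    -- reduce h to an increment s with |s| ≤ π
    obtain ⟨s, hsne, hsπ, hgh, hads, hs3D⟩ :
        ∃ s : ℝ, s ≠ 0 ∧ |s| ≤ Real.pi ∧ g h = g s ∧ |α - (|s|)| ≤ D ∧ |s| ≤ 3*D := by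
      by_cases hhπ : h ≤ Real.pi
      · refine ⟨h, (show (0:ℝ) < h by linarith).ne', ?_, rfl, ?_, ?_⟩
        · rw [abs_of_pos (show (0:ℝ) < h by linarith)]; exact hhπ
        · rw [abs_of_pos (show (0:ℝ) < h by linarith)]
        · rw [abs_of_pos (show (0:ℝ) < h by linarith)]; linarith
      · push_neg at hhπ
        have hhα : α < h := by linarith
        have hDeq : D = h - α := by
          rw [hD_def, abs_of_neg (by linarith : α - h < 0)]; ring
        refine ⟨h - 2*Real.pi, ?_, ?_, ?_, ?_, ?_⟩
        · intro e
          have h2 : h = 2*Real.pi := by linarith [sub_eq_zero.mp e]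
          rw [h2] at hsinh
          rw [show 2*Real.pi/2 = Real.pi by ring] at hsinh
          exact hsinh Real.sin_pi
        · rw [abs_le]; constructor <;> linarith
        · simp only [hg_def]
          have hc : Real.cos (h/2) = -Real.cos ((h - 2*Real.pi)/2) := by
            rw [show h/2 = (h - 2*Real.pi)/2 + Real.pi by ring, Real.cos_add_pi]
          have hs' : Real.sin (h/2) = -Real.sin ((h - 2*Real.pi)/2) := by
            rw [show h/2 = (h - 2*Real.pi)/2 + Real.pi by ring, Real.sin_add_pi]
          have hf' : f (x - h) = f (x - (h - 2*Real.pi)) := by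
            have hp := hper (x - h)
            rw [show x - h + 2*Real.pi = x - (h - 2*Real.pi) by ring] at hp
            rw [← hp]
          rw [hc, hs', hf', neg_div_neg_eq]
        · rcases le_or_gt h (2*Real.pi) with hle | hlt
          · rw [abs_of_nonpos (by linarith : h - 2*Real.pi ≤ 0), abs_le]
            constructor <;> linarith
          · rw [abs_of_pos (by linarith : (0:ℝ) < h - 2*Real.pi), abs_le]
            constructor <;> linarith
        · have hD3 : Real.pi ≤ 3*D := by nlinarith
          rw [abs_le]; constructor <;> linarith
    -- derivative of the linearization factor
    have hMd : ∀ u : ℝ, Real.sin (u/2) ≠ 0 →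
        HasDerivAt M ((Real.sin u - u)/(4*Real.sin (u/2)^2)) u := by
      intro u hsu
      have hhalf : HasDerivAt (fun v : ℝ => v/2) (1/2) u := (hasDerivAt_id u).div_const 2
      have hq := (hhalf.cos).div (hhalf.sin) hsu
      have hmul := (hasDerivAt_id u).mul (hq.const_mul (1/2 : ℝ))
      rw [hM_def]
      refine hmul.congr_deriv ?_
      have hpyth : Real.sin (u/2)^2 + Real.cos (u/2)^2 = 1 := Real.sin_sq_add_cos_sq _
      have hsin2 : Real.sin u = 2 * Real.sin (u/2) * Real.cos (u/2) := by
        have h2m := Real.sin_two_mul (u/2)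
        rw [show 2 * (u/2) = u by ring] at h2m
        exact h2m
      have hqd : 1/2 * ((-Real.sin (u/2) * (1/2) * Real.sin (u/2)
            - Real.cos (u/2) * (Real.cos (u/2) * (1/2))) / Real.sin (u/2) ^ 2)
          = -1/(4*Real.sin (u/2)^2) := by
        have hnum : -Real.sin (u/2) * (1/2) * Real.sin (u/2)
            - Real.cos (u/2) * (Real.cos (u/2) * (1/2)) = -(1/2) := by
          linear_combination (-(1:ℝ)/2) * hpyth
        rw [hnum]
        ring
      have hphi : (1:ℝ)/2 * (Real.cos (u/2) / Real.sin (u/2))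
          = Real.sin u / (4 * Real.sin (u/2)^2) := by
        rw [hsin2]
        field_simp
        ring
      simp only [Pi.div_apply]
      rw [hqd, hphi]
      simp only [id_eq]
      ring
    -- bound for the derivative of the linearization factor
    have hMb : ∀ u : ℝ, 0 < u → u ≤ Real.pi →
        |(Real.sin u - u)/(4*Real.sin (u/2)^2)| ≤ 13 := by
      intro u hu0 huπ
      have hsl : u/8 ≤ Real.sin (u/2) := by
        have := aux_sin_lb (u := u/2) (by linarith) (by nlinarith)
        linarith
      have hs2 : u^2/64 ≤ Real.sin (u/2)^2 := by nlinarith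
      have habs : |Real.sin u - u| ≤ u^3/4 := by
        have hss := aux_sub_sin hu0.le (by linarith)
        have hsle : Real.sin u ≤ u := Real.sin_le hu0.le
        rw [abs_sub_comm, abs_of_nonneg (by linarith)]
        linarith
      have hden : (0:ℝ) < 4*Real.sin (u/2)^2 := by nlinarith
      rw [abs_div, abs_of_pos hden, div_le_iff₀ hden]
      nlinarith
    -- Lipschitz estimate for M between α and |s|
    have hs0' : 0 < |s| := abs_pos.mpr hsne
    have hMlip : |M α - M (|s|)| ≤ 13 * |α - (|s|)| := by
      have hmm : ∀ u ∈ uIcc α |s|, 0 < u ∧ u ≤ Real.pi := by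
        intro u hu
        rcases Set.mem_uIcc.mp hu with ⟨ha', hb'⟩ | ⟨ha', hb'⟩ <;>
          exact ⟨by linarith, by linarith⟩
      have hd : ∀ u ∈ uIcc α |s|,
          HasDerivWithinAt M ((Real.sin u - u)/(4*Real.sin (u/2)^2)) (uIcc α |s|) u := by
        intro u hu
        obtain ⟨hu0, huπ⟩ := hmm u hu
        have : Real.sin (u/2) ≠ 0 :=
          ne_of_gt (Real.sin_pos_of_pos_of_lt_pi (by linarith) (by linarith))
        exact (hMd u this).hasDerivWithinAt
      have hbd : ∀ u ∈ uIcc α |s|, ‖(Real.sin u - u)/(4*Real.sin (u/2)^2)‖ ≤ 13 := by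
        intro u hu
        obtain ⟨hu0, huπ⟩ := hmm u hu
        rw [Real.norm_eq_abs]
        exact hMb u hu0 huπ
      have key := Convex.norm_image_sub_le_of_norm_hasDerivWithin_le hd hbd
        (convex_uIcc α |s|) (left_mem_uIcc) (right_mem_uIcc)
      rw [Real.norm_eq_abs, Real.norm_eq_abs, abs_sub_comm] at key
      rw [abs_sub_comm (|s|) α] at key
      exact key
    -- assemble
    have hptα := hpt α (ne_of_gt hα0) (by rw [abs_of_pos hα0]; linarith)
    rw [abs_of_pos hα0] at hptα
    have hpts := hpt s hsne hsπ
    have hAb2 : |A| ≤ 4*H := by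
      have := hAb x
      rw [← hA_def] at this
      nlinarith
    rw [hgh]
    have tri : |g α - g s| ≤ |g α - A * M α| + |g s - A * M (|s|)| + |A| * |M α - M (|s|)| := by
      calc |g α - g s|
          = |(g α - A * M α) + (-(g s - A * M (|s|))) + A * (M α - M (|s|))| := by
            congr 1; ring
        _ ≤ |(g α - A * M α) + (-(g s - A * M (|s|)))| + |A * (M α - M (|s|))| := abs_add_le _ _
        _ ≤ |g α - A * M α| + |(-(g s - A * M (|s|)))| + |A * (M α - M (|s|))| := by
            linarith [abs_add_le (g α - A * M α) (-(g s - A * M (|s|)))]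
        _ = |g α - A * M α| + |g s - A * M (|s|)| + |A| * |M α - M (|s|)| := by
            rw [abs_neg, abs_mul]
    -- numeric facts
    have hR0 : (0:ℝ) < D ^ γ * α ^ (γ₁ - γ) := by positivity
    have fD : D ^ γ₁ ≤ 2 * (D ^ γ * α ^ (γ₁-γ)) := by
      have ha : (2*D) ^ (γ₁-γ) ≤ α ^ (γ₁-γ) :=
        Real.rpow_le_rpow_of_nonpos hα0 hα2D (by linarith)
      have hmulr : (2*D) ^ (γ₁-γ) = 2 ^ (γ₁-γ) * D ^ (γ₁-γ) :=
        Real.mul_rpow (by norm_num) hD0.le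
      have h2g : (1:ℝ)/2 ≤ 2 ^ (γ₁-γ) := by
        have := Real.rpow_le_rpow_of_exponent_le (show (1:ℝ) ≤ 2 by norm_num)
          (show (-1:ℝ) ≤ γ₁ - γ by linarith)
        rwa [Real.rpow_neg_one, show ((2:ℝ))⁻¹ = 1/2 by norm_num] at this
      have hDD : D ^ γ * D ^ (γ₁-γ) = D ^ γ₁ := by
        rw [← Real.rpow_add hD0, show γ + (γ₁-γ) = γ₁ by ring]
      have hgpos : (0:ℝ) < D ^ γ := Real.rpow_pos_of_pos hD0 _
      nlinarith [mul_le_mul_of_nonneg_left ha hgpos.le,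
        Real.rpow_pos_of_pos hD0 (γ₁-γ)]
    have fγ : D ^ γ ≤ 4 * (D ^ γ * α ^ (γ₁-γ)) := by
      have ha : Real.pi ^ (γ₁-γ) ≤ α ^ (γ₁-γ) :=
        Real.rpow_le_rpow_of_nonpos hα0 hαπ.le (by linarith)
      have hp : Real.pi⁻¹ ≤ Real.pi ^ (γ₁-γ) := by
        have := Real.rpow_le_rpow_of_exponent_le
          (show (1:ℝ) ≤ Real.pi by linarith) (show (-1:ℝ) ≤ γ₁ - γ by linarith)
        rwa [Real.rpow_neg_one] at this
      have hinv : (1:ℝ)/4 ≤ Real.pi⁻¹ := by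
        have h14 : (1:ℝ)/4 ≤ 1/Real.pi := one_div_le_one_div_of_le hπ hπ4
        rwa [one_div Real.pi] at h14
      have hgpos : (0:ℝ) < D ^ γ := Real.rpow_pos_of_pos hD0 _
      nlinarith [mul_le_mul_of_nonneg_left ha hgpos.le,
        mul_le_mul_of_nonneg_left (le_trans hinv hp) hgpos.le]
    have fα : α ^ γ₁ ≤ 2 * D ^ γ₁ := by
      have hr := Real.rpow_le_rpow hα0.le hα2D h1.le
      rw [Real.mul_rpow (by norm_num) hD0.le] at hr
      have h2 : (2:ℝ) ^ γ₁ ≤ 2 := by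
        calc (2:ℝ) ^ γ₁ ≤ 2 ^ (1:ℝ) := Real.rpow_le_rpow_of_exponent_le one_le_two hγ₁1
          _ = 2 := Real.rpow_one 2
      nlinarith [Real.rpow_pos_of_pos hD0 γ₁]
    have fs : |s| ^ γ₁ ≤ 3 * D ^ γ₁ := by
      have hr := Real.rpow_le_rpow (abs_nonneg s) hs3D h1.le
      rw [Real.mul_rpow (by norm_num) hD0.le] at hr
      have h2 : (3:ℝ) ^ γ₁ ≤ 3 := by
        calc (3:ℝ) ^ γ₁ ≤ 3 ^ (1:ℝ) :=
              Real.rpow_le_rpow_of_exponent_le (by norm_num) hγ₁1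
          _ = 3 := Real.rpow_one 3
      nlinarith [Real.rpow_pos_of_pos hD0 γ₁]
    have fmin : |α - (|s|)| ≤ 4 * D ^ γ := by
      rcases le_or_gt D 1 with hle | hlt
      · have hDg : D ≤ D ^ γ := by
          have := Real.rpow_le_rpow_of_exponent_ge hD0 hle h3.le
          rwa [Real.rpow_one] at this
        have hgpos : (0:ℝ) < D ^ γ := Real.rpow_pos_of_pos hD0 _
        calc |α - (|s|)| ≤ D := hads
          _ ≤ D ^ γ := hDg
          _ ≤ 4 * D ^ γ := by linarith
      · have h1D : (1:ℝ) ≤ D ^ γ := by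
          have := Real.rpow_le_rpow (by norm_num : (0:ℝ) ≤ 1) hlt.le hγ0.le
          rwa [Real.one_rpow] at this
        have hsπ' : |α - (|s|)| ≤ Real.pi := by
          rw [abs_le]; constructor <;> linarith
        calc |α - (|s|)| ≤ Real.pi := hsπ'
          _ ≤ 4 := hπ4
          _ ≤ 4 * D ^ γ := by linarith
    -- final combination
    have g1 : 4 * H * α ^ γ₁ ≤ 16 * (H * (D ^ γ * α ^ (γ₁-γ))) := by
      have m1 := mul_le_mul_of_nonneg_left fα hH
      have m2 := mul_le_mul_of_nonneg_left fD hH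
      linarith
    have g2 : 4 * H * |s| ^ γ₁ ≤ 24 * (H * (D ^ γ * α ^ (γ₁-γ))) := by
      have m1 := mul_le_mul_of_nonneg_left fs hH
      have m2 := mul_le_mul_of_nonneg_left fD hH
      linarith
    have g3 : |A| * (13 * |α - (|s|)|) ≤ 832 * (H * (D ^ γ * α ^ (γ₁-γ))) := by
      have m1 : |A| * |α - (|s|)| ≤ (4*H) * (4 * D ^ γ) :=
        mul_le_mul hAb2 fmin (abs_nonneg _) (by linarith)
      have m2 := mul_le_mul_of_nonneg_left fγ hH
      nlinarith [m1, m2]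
    have hfin := hMlip
    calc |g α - g s|
        ≤ |g α - A * M α| + |g s - A * M (|s|)| + |A| * |M α - M (|s|)| := tri
      _ ≤ 4 * H * α ^ γ₁ + 4 * H * |s| ^ γ₁ + |A| * (13 * |α - (|s|)|) := by
          have hm3 : |A| * |M α - M (|s|)| ≤ |A| * (13 * |α - (|s|)|) :=
            mul_le_mul_of_nonneg_left hMlip (abs_nonneg _)
          linarith [hptα, hpts]
      _ ≤ 16 * (H * (D ^ γ * α ^ (γ₁-γ))) + 24 * (H * (D ^ γ * α ^ (γ₁-γ)))
            + 832 * (H * (D ^ γ * α ^ (γ₁-γ))) := by linarith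
      _ ≤ 1000 * (H * (D ^ γ * α ^ (γ₁-γ))) := by
          have := mul_nonneg hH hR0.le
          linarith
end

section
/- Let d, m ≥ 1 be integers. Let f : ℝ → ℝ be (m+2)-times continuously differentiable with Σ_{k=1}^{m+2} ‖f^{(k)}‖_{L^∞} ≤ 1, and let g : ℝ^d → ℝ be m-times continuously differentiable with ‖∇^j g‖_{L^∞} < ∞ for all 1 ≤ j ≤ m. Then there is a constant C depending only on d and m such that ‖∇^m (f ∘ g)‖_{L^∞} ≤ C (‖∇ g‖_{L^∞}^m + ‖∇^m g‖_{L^∞}). -/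
open Set




variable {E : Type} [NormedAddCommGroup E] [NormedSpace ℝ E]

lemma norm_fderiv_iteratedFDeriv' {F : Type} [NormedAddCommGroup F] [NormedSpace ℝ F]
    (g : E → F) (n : ℕ) (x : E) :
    ‖fderiv ℝ (iteratedFDeriv ℝ n g) x‖ = ‖iteratedFDeriv ℝ (n + 1) g x‖ := by
  rw [iteratedFDeriv_succ_eq_comp_left]
  simp [LinearIsometryEquiv.norm_map]

lemma norm_iteratedFDeriv_two_iteratedFDeriv (k : ℕ) :
    ∀ {F : Type} [NormedAddCommGroup F] [NormedSpace ℝ F] (g : E → F) (x : E),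
    ‖iteratedFDeriv ℝ 2 (iteratedFDeriv ℝ k g) x‖ = ‖iteratedFDeriv ℝ (k + 2) g x‖ := by
  induction k with
  | zero =>
      intro F _ _ g x
      rw [iteratedFDeriv_zero_eq_comp]
      rw [LinearIsometryEquiv.norm_iteratedFDeriv_comp_left]
  | succ k ih =>
      intro F _ _ g x
      have h1 : iteratedFDeriv ℝ (k + 1) g =
          (continuousMultilinearCurryRightEquiv' ℝ k E F).symm ∘
            iteratedFDeriv ℝ k fun y => fderiv ℝ g y := by
        funext y; exact iteratedFDeriv_succ_eq_comp_right
      have h2 := LinearIsometryEquiv.norm_iteratedFDeriv_comp_left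
        (continuousMultilinearCurryRightEquiv' ℝ k E F).symm
        (iteratedFDeriv ℝ k fun y => fderiv ℝ g y) x 2
      rw [h1, h2, ih, norm_iteratedFDeriv_fderiv]

lemma iteratedFDeriv_sub_const {F : Type} [NormedAddCommGroup F] [NormedSpace ℝ F]
    (g : E → F) (c : F) (k : ℕ) :
    iteratedFDeriv ℝ (k + 1) (fun y => g y - c) = iteratedFDeriv ℝ (k + 1) g := by
  funext x
  rw [iteratedFDeriv_succ_eq_comp_right, iteratedFDeriv_succ_eq_comp_right]
  simp only [Function.comp_apply]
  congr 2
  funext y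
  exact fderiv_sub_const c

variable {E : Type} [NormedAddCommGroup E] [NormedSpace ℝ E]

lemma lk_step {F : Type} [NormedAddCommGroup F] [NormedSpace ℝ F]
    (Ψ : E → F) (hΨ : ContDiff ℝ 2 Ψ) (B0 B2 : ℝ)
    (hB0 : ∀ x, ‖Ψ x‖ ≤ B0) (hB2 : ∀ x, ‖iteratedFDeriv ℝ 2 Ψ x‖ ≤ B2)
    {h : ℝ} (hh : 0 < h) (x : E) :
    ‖fderiv ℝ Ψ x‖ ≤ 2 * B0 / h + h * B2 := by
  have hB0' : 0 ≤ B0 := le_trans (norm_nonneg _) (hB0 x)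
  have hB2' : 0 ≤ B2 := le_trans (norm_nonneg _) (hB2 x)
  have hrhs : 0 ≤ 2 * B0 / h + h * B2 := by positivity
  apply ContinuousLinearMap.opNorm_le_bound _ hrhs
  intro v
  rcases eq_or_ne v 0 with rfl | hv
  · simp
  have hv' : 0 < ‖v‖ := norm_pos_iff.mpr hv
  set t0 : ℝ := h / ‖v‖ with ht0def
  have ht0 : 0 < t0 := by positivity
  -- the line through x in direction v
  have hγ : ∀ t : ℝ, HasDerivAt (fun t : ℝ => x + t • v) v t := by
    intro t
    simpa using ((hasDerivAt_id t).smul_const v).const_add x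
  have hdiff : Differentiable ℝ Ψ := hΨ.differentiable (by norm_num)
  set φ' : ℝ → F := fun t => fderiv ℝ Ψ (x + t • v) v with hφ'def
  have hφ : ∀ t : ℝ, HasDerivAt (fun t : ℝ => Ψ (x + t • v)) (φ' t) t := fun t =>
    (hdiff (x + t • v)).hasFDerivAt.comp_hasDerivAt t (hγ t)
  -- derivative of φ'
  have hΦ : Differentiable ℝ (fderiv ℝ Ψ) :=
    (hΨ.fderiv_right (m := 1) (by norm_num)).differentiable (by norm_num)
  have hφ'' : ∀ t : ℝ, HasDerivAt φ'
      ((fderiv ℝ (fderiv ℝ Ψ) (x + t • v) v) v) t := by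
    intro t
    have h1 : HasDerivAt (fun t : ℝ => fderiv ℝ Ψ (x + t • v))
        (fderiv ℝ (fderiv ℝ Ψ) (x + t • v) v) t :=
      (hΦ (x + t • v)).hasFDerivAt.comp_hasDerivAt t (hγ t)
    simpa using h1.clm_apply (hasDerivAt_const t v)
  have hsecond : ∀ t : ℝ, ‖(fderiv ℝ (fderiv ℝ Ψ) (x + t • v) v) v‖ ≤ B2 * (‖v‖ * ‖v‖) := by
    intro t
    have h1 : (fderiv ℝ (fderiv ℝ Ψ) (x + t • v) v) v
        = iteratedFDeriv ℝ 2 Ψ (x + t • v) ![v, v] := by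
      rw [iteratedFDeriv_two_apply]; simp
    rw [h1]
    calc ‖iteratedFDeriv ℝ 2 Ψ (x + t • v) ![v, v]‖
        ≤ ‖iteratedFDeriv ℝ 2 Ψ (x + t • v)‖ * ∏ i, ‖(![v, v]) i‖ :=
          ContinuousMultilinearMap.le_opNorm _ _
      _ ≤ B2 * (‖v‖ * ‖v‖) := by
          rw [Fin.prod_univ_two]
          simp only [Matrix.cons_val_zero, Matrix.cons_val_one, Matrix.head_cons]
          exact mul_le_mul_of_nonneg_right (hB2 _) (by positivity)
  -- MVT for φ' on [0, t0]
  have hmvt1 : ∀ t ∈ Icc (0:ℝ) t0, ‖φ' t - φ' 0‖ ≤ (B2 * (‖v‖ * ‖v‖)) * t0 := by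
    intro t ht
    have := Convex.norm_image_sub_le_of_norm_hasDerivWithin_le
      (f := φ') (f' := fun t => (fderiv ℝ (fderiv ℝ Ψ) (x + t • v) v) v)
      (C := B2 * (‖v‖ * ‖v‖)) (s := Icc (0:ℝ) t0)
      (fun s _ => (hφ'' s).hasDerivWithinAt) (fun s _ => hsecond s)
      (convex_Icc _ _) (left_mem_Icc.mpr ht0.le) ht
    calc ‖φ' t - φ' 0‖ ≤ (B2 * (‖v‖ * ‖v‖)) * ‖t - 0‖ := this
      _ ≤ (B2 * (‖v‖ * ‖v‖)) * t0 := by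
          apply mul_le_mul_of_nonneg_left _ (by positivity)
          rw [sub_zero, Real.norm_eq_abs, abs_of_nonneg ht.1]
          exact ht.2
  -- MVT for ψ := φ - t • φ' 0 on [0, t0]
  have hmvt2 : ‖(Ψ (x + t0 • v) - t0 • φ' 0) - (Ψ (x + (0:ℝ) • v) - (0:ℝ) • φ' 0)‖
      ≤ ((B2 * (‖v‖ * ‖v‖)) * t0) * ‖t0 - 0‖ := by
    apply Convex.norm_image_sub_le_of_norm_hasDerivWithin_le
      (f := fun t : ℝ => Ψ (x + t • v) - t • φ' 0) (f' := fun t => φ' t - φ' 0)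
      (fun s _ => ((hφ s).sub ((hasDerivAt_id s).smul_const (φ' 0))).hasDerivWithinAt.congr_deriv
        (by simp)) hmvt1 (convex_Icc _ _) (left_mem_Icc.mpr ht0.le)
      (right_mem_Icc.mpr ht0.le)
  have key : ‖t0 • φ' 0‖ ≤ 2 * B0 + (B2 * (‖v‖ * ‖v‖)) * t0 ^ 2 := by
    have h2 : ‖t0 - 0‖ = t0 := by rw [sub_zero, Real.norm_eq_abs, abs_of_pos ht0]
    rw [h2] at hmvt2
    have h3 : t0 • φ' 0 = (Ψ (x + t0 • v) - Ψ (x + (0:ℝ) • v))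
        - ((Ψ (x + t0 • v) - t0 • φ' 0) - (Ψ (x + (0:ℝ) • v) - (0:ℝ) • φ' 0)) := by
      simp
    rw [h3]
    calc _ ≤ ‖Ψ (x + t0 • v) - Ψ (x + (0:ℝ) • v)‖
          + ‖(Ψ (x + t0 • v) - t0 • φ' 0) - (Ψ (x + (0:ℝ) • v) - (0:ℝ) • φ' 0)‖ :=
          norm_sub_le _ _
      _ ≤ (‖Ψ (x + t0 • v)‖ + ‖Ψ (x + (0:ℝ) • v)‖) + (B2 * (‖v‖ * ‖v‖)) * t0 * t0 := by
          gcongr; exact norm_sub_le _ _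
      _ ≤ 2 * B0 + (B2 * (‖v‖ * ‖v‖)) * (t0 * t0) := by
          have h4 := hB0 (x + t0 • v); have h5 := hB0 (x + (0:ℝ) • v)
          have h6 : (0:ℝ) ≤ (B2 * (‖v‖ * ‖v‖)) * t0 * t0 := by positivity
          nlinarith
      _ = 2 * B0 + (B2 * (‖v‖ * ‖v‖)) * t0 ^ 2 := by ring
  -- conclude
  have hφ'0 : φ' 0 = fderiv ℝ Ψ x v := by simp [hφ'def]
  have hnorm : t0 * ‖fderiv ℝ Ψ x v‖ ≤ 2 * B0 + (B2 * (‖v‖ * ‖v‖)) * t0 ^ 2 := by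
    rw [← hφ'0]
    calc t0 * ‖φ' 0‖ = ‖t0 • φ' 0‖ := by
          rw [norm_smul, Real.norm_eq_abs, abs_of_pos ht0]
      _ ≤ _ := key
  refine le_of_mul_le_mul_left ?_ ht0
  calc t0 * ‖fderiv ℝ Ψ x v‖ ≤ 2 * B0 + (B2 * (‖v‖ * ‖v‖)) * t0 ^ 2 := hnorm
    _ = t0 * ((2 * B0 / h + h * B2) * ‖v‖) := by
        rw [ht0def]; field_simp

section Chain
variable (m : ℕ) (β : ℕ → ℝ) (hpos : ∀ j, 0 < β j)
  (hq : ∀ j, 1 ≤ j → j + 2 ≤ m → β (j+1) ^ 2 ≤ 9 * β j * β (j+2))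

include hpos hq

lemma lemR : ∀ s i, 1 ≤ i → i + s + 1 ≤ m →
    β (i+1) * β (i+s) ≤ 9 ^ s * β (i) * β (i+s+1) := by
  intro s
  induction s with
  | zero => intro i hi him; simp [mul_comm]
  | succ s ih =>
      intro i hi him
      have IH := ih i hi (by omega)
      have hq' := hq (i+s) (by omega) (by omega)
      have h9 : (0:ℝ) < 9 ^ s := by positivity
      have hmul := mul_le_mul IH hq' (sq_nonneg _)
        (le_of_lt (mul_pos (mul_pos h9 (hpos i)) (hpos (i+s+1))))
      have hx : (0:ℝ) < β (i+s) * β (i+s+1) := mul_pos (hpos _) (hpos _)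
      apply le_of_mul_le_mul_right _ hx
      calc β (i+1) * β (i+(s+1)) * (β (i+s) * β (i+s+1))
          = β (i+1) * β (i+s) * β (i+s+1) ^ 2 := by ring
        _ ≤ 9 ^ s * β i * β (i+s+1) * (9 * β (i+s) * β (i+s+2)) := hmul
        _ = 9 ^ (s+1) * β i * β (i+(s+1)+1) * (β (i+s) * β (i+s+1)) := by ring

lemma lemR' : ∀ i i', 1 ≤ i → i ≤ i' → i' + 1 ≤ m →
    β (i+1) * β i' ≤ 9 ^ m * β i * β (i'+1) := by
  intro i i' hi hii' him
  obtain ⟨s, rfl⟩ : ∃ s, i' = i + s := ⟨i' - i, by omega⟩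
  calc β (i+1) * β (i+s) ≤ 9 ^ s * β i * β (i+s+1) := lemR m β hpos hq s i hi (by omega)
    _ ≤ 9 ^ m * β i * β (i+s+1) := by
        have h9 : (9:ℝ) ^ s ≤ 9 ^ m := by
          apply pow_le_pow_right₀ (by norm_num) (by omega)
        exact mul_le_mul_of_nonneg_right
          (mul_le_mul_of_nonneg_right h9 (hpos i).le) (hpos (i+s+1)).le

lemma lemT : ∀ p i', p + 1 ≤ i' + 1 → i' + 1 ≤ m →
    β (p+1) * β i' ^ p ≤ (9 ^ m) ^ p * β 1 * β (i'+1) ^ p := by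
  intro p
  induction p with
  | zero => intro i' h1 h2; simp
  | succ p ih =>
      intro i' h1 h2
      have IH := ih i' (by omega) h2
      have hR := lemR' m β hpos hq (p+1) i' (by omega) (by omega) h2
      have h9 : (0:ℝ) < (9:ℝ) ^ m := by positivity
      have hmul := mul_le_mul IH hR
        (le_of_lt (mul_pos (hpos _) (hpos _)))
        (le_of_lt (mul_pos (mul_pos (pow_pos h9 p) (hpos 1)) (pow_pos (hpos _) p)))
      apply le_of_mul_le_mul_right _ (hpos (p+1))
      calc β (p+1+1) * β i' ^ (p+1) * β (p+1)
          = β (p+1) * β i' ^ p * (β (p+1+1) * β i') := by ring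
        _ ≤ (9 ^ m) ^ p * β 1 * β (i'+1) ^ p * (9 ^ m * β (p+1) * β (i'+1)) := hmul
        _ = (9 ^ m) ^ (p+1) * β 1 * β (i'+1) ^ (p+1) * β (p+1) := by ring

lemma lemU : ∀ t p, p + 1 + t ≤ m →
    β (p+1) ^ (p + t) ≤ (9 ^ m) ^ (p * t) * β 1 ^ t * β (p+1+t) ^ p := by
  intro t
  induction t with
  | zero => intro p hp; simp
  | succ t ih =>
      intro p hp
      have IH := ih p (by omega)
      have hT := lemT m β hpos hq p (p+1+t) (by omega) (by omega)
      have h9 : (0:ℝ) < (9:ℝ) ^ m := by positivity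
      have hmul := mul_le_mul IH hT
        (le_of_lt (mul_pos (hpos _) (pow_pos (hpos _) p)))
        (le_of_lt (mul_pos (mul_pos (pow_pos h9 _) (pow_pos (hpos 1) t)) (pow_pos (hpos _) p)))
      apply le_of_mul_le_mul_right _ (pow_pos (hpos (p+1+t)) p)
      calc β (p+1) ^ (p + (t+1)) * β (p+1+t) ^ p
          = β (p+1) ^ (p+t) * (β (p+1) * β (p+1+t) ^ p) := by ring
        _ ≤ (9 ^ m) ^ (p*t) * β 1 ^ t * β (p+1+t) ^ p *
            ((9 ^ m) ^ p * β 1 * β (p+1+t+1) ^ p) := hmul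
        _ = (9 ^ m) ^ (p*(t+1)) * β 1 ^ (t+1) * β (p+1+(t+1)) ^ p * β (p+1+t) ^ p := by
            rw [Nat.mul_succ, pow_add]
            ring

lemma chain_interp : ∀ k, 1 ≤ k → k ≤ m →
    β k ^ (m - 1) ≤ 9 ^ (m*m*m) * β 1 ^ (m - k) * β m ^ (k - 1) := by
  intro k hk hkm
  obtain ⟨p, rfl⟩ : ∃ p, k = p + 1 := ⟨k - 1, by omega⟩
  have ht := lemU m β hpos hq (m - (p+1)) p (by omega)
  have e1 : p + (m - (p+1)) = m - 1 := by omega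
  have e2 : p + 1 + (m - (p+1)) = m := by omega
  rw [e1, e2] at ht
  have h9 : ((9:ℝ) ^ m) ^ (p * (m - (p+1))) ≤ 9 ^ (m*m*m) := by
    rw [← pow_mul]
    apply pow_le_pow_right₀ (by norm_num)
    calc m * (p * (m - (p+1))) ≤ m * (m * m) :=
          Nat.mul_le_mul_left _ (Nat.mul_le_mul (by omega) (by omega))
      _ = m * m * m := by ring
  have hfin : β (p+1) ^ (m-1) ≤ 9 ^ (m*m*m) * β 1 ^ (m - (p+1)) * β m ^ p := by
    refine le_trans ht ?_
    exact mul_le_mul_of_nonneg_right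
      (mul_le_mul_of_nonneg_right h9 (pow_pos (hpos 1) _).le)
      (pow_pos (hpos m) p).le
  simpa using hfin

end Chain

section Aux
variable {E : Type} [NormedAddCommGroup E] [NormedSpace ℝ E]

lemma iteratedFDeriv_sub_const' {F : Type} [NormedAddCommGroup F] [NormedSpace ℝ F]
    (g : E → F) (c : F) {k : ℕ} (hk : 1 ≤ k) :
    iteratedFDeriv ℝ k (fun y => g y - c) = iteratedFDeriv ℝ k g := by
  obtain ⟨k, rfl⟩ : ∃ p, k = p + 1 := ⟨k - 1, by omega⟩
  exact iteratedFDeriv_sub_const g c k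

lemma two_pow_bound (m : ℕ) (a b : ℝ) (ha : 0 ≤ a) (hb : 0 ≤ b) :
    (a + b) ^ m ≤ 2 ^ m * (a ^ m + b ^ m) := by
  have h1 : a + b ≤ 2 * max a b := by
    rcases le_total a b with h | h
    · rw [max_eq_right h]; linarith
    · rw [max_eq_left h]; linarith
  have hmax : (0:ℝ) ≤ max a b := le_trans ha (le_max_left _ _)
  calc (a + b) ^ m ≤ (2 * max a b) ^ m := pow_le_pow_left₀ (by linarith) h1 m
    _ = 2 ^ m * (max a b) ^ m := mul_pow _ _ _
    _ ≤ 2 ^ m * (a ^ m + b ^ m) := by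
        apply mul_le_mul_of_nonneg_left _ (by positivity)
        rcases le_total a b with h | h
        · rw [max_eq_right h]
          exact le_add_of_nonneg_left (pow_nonneg ha m)
        · rw [max_eq_left h]
          exact le_add_of_nonneg_right (pow_nonneg hb m)

end Aux


/-- Bound on the `m`-th derivative of a composition:
`‖∇^m (f ∘ g)‖_∞ ≲ ‖∇g‖_∞^m + ‖∇^m g‖_∞` when `Σ_{k=1}^{m+2} ‖f^{(k)}‖_∞ ≤ 1`. -/
theorem composition_derivative_bound
    (d m : ℕ) (hd : 1 ≤ d) (hm : 1 ≤ m) :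
    ∃ C : ℝ, 0 < C ∧
      ∀ (f : ℝ → ℝ) (c : ℕ → ℝ),
        ContDiff ℝ (m + 2) f →
        (∀ k ∈ Finset.Icc 1 (m + 2), ∀ x : ℝ, |iteratedDeriv k f x| ≤ c k) →
        (∑ k ∈ Finset.Icc 1 (m + 2), c k) ≤ 1 →
        ∀ (g : EuclideanSpace ℝ (Fin d) → ℝ) (M : ℕ → ℝ),
          ContDiff ℝ m g →
          (∀ j ∈ Finset.Icc 1 m, ∀ x, ‖iteratedFDeriv ℝ j g x‖ ≤ M j) →
          ∀ x, ‖iteratedFDeriv ℝ m (fun y => f (g y)) x‖ ≤ C * (M 1 ^ m + M m) := by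
  refine ⟨(m.factorial : ℝ) * 9 ^ (m*m*m*m) * 2 ^ m, by positivity, ?_⟩
  intro f c hf hfc hsum g M hg hgM x
  set C : ℝ := (m.factorial : ℝ) * 9 ^ (m*m*m*m) * 2 ^ m with hCdef
  set Q : ℝ := 9 ^ (m*m*m) with hQdef
  have hQ1 : (1:ℝ) ≤ Q := one_le_pow₀ (by norm_num)
  have hQpos : (0:ℝ) < Q := by positivity
  -- sup norms of derivatives of g
  set b : ℕ → ℝ := fun j => ⨆ y, ‖iteratedFDeriv ℝ j g y‖ with hbdef
  have hbdd : ∀ j, 1 ≤ j → j ≤ m →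
      BddAbove (Set.range fun y => ‖iteratedFDeriv ℝ j g y‖) := by
    intro j h1 h2
    exact ⟨M j, by rintro _ ⟨y, rfl⟩; exact hgM j (Finset.mem_Icc.mpr ⟨h1, h2⟩) y⟩
  have hble : ∀ j, 1 ≤ j → j ≤ m → ∀ y, ‖iteratedFDeriv ℝ j g y‖ ≤ b j :=
    fun j h1 h2 y => le_ciSup (hbdd j h1 h2) y
  have hb0 : ∀ j, 1 ≤ j → j ≤ m → 0 ≤ b j :=
    fun j h1 h2 => le_trans (norm_nonneg _) (hble j h1 h2 x)
  have hbM : ∀ j, 1 ≤ j → j ≤ m → b j ≤ M j :=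
    fun j h1 h2 => ciSup_le fun y => hgM j (Finset.mem_Icc.mpr ⟨h1, h2⟩) y
  -- Landau–Kolmogorov step on sup norms
  have hLK : ∀ j, 1 ≤ j → j + 2 ≤ m → ∀ h : ℝ, 0 < h →
      b (j+1) ≤ 2 * b j / h + h * b (j+2) := by
    intro j h1 h2 h hh
    have hΨ : ContDiff ℝ 2 (iteratedFDeriv ℝ j g) := by
      apply hg.iteratedFDeriv_right
      exact_mod_cast (show (2:ℕ) + j ≤ m by omega)
    have key := lk_step (iteratedFDeriv ℝ j g) hΨ (b j) (b (j+2))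
      (fun y => hble j h1 (by omega) y)
      (fun y => by
        rw [norm_iteratedFDeriv_two_iteratedFDeriv]
        exact hble (j+2) (by omega) h2 y) hh
    refine ciSup_le fun y => ?_
    have hk := key y
    rwa [norm_fderiv_iteratedFDeriv'] at hk
  -- main epsilon-perturbed bound
  have main : ∀ ε : ℝ, 0 < ε →
      ‖iteratedFDeriv ℝ m (fun y => f (g y)) x‖ ≤ C * ((b 1 + ε) ^ m + (b m + ε)) := by
    intro ε hε
    set β : ℕ → ℝ := fun j => b (max 1 (min j m)) + ε with hβdef
    have hclamp : ∀ j, 1 ≤ j → j ≤ m → β j = b j + ε := by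
      intro j h1 h2
      simp only [hβdef]
      congr 2
      omega
    have hβpos : ∀ j, 0 < β j := by
      intro j
      have h1 : 1 ≤ max 1 (min j m) := by omega
      have h2 : max 1 (min j m) ≤ m := by omega
      have := hb0 _ h1 h2
      simp only [hβdef]
      linarith
    have hqβ : ∀ j, 1 ≤ j → j + 2 ≤ m → β (j+1) ^ 2 ≤ 9 * β j * β (j+2) := by
      intro j h1 h2
      rw [hclamp (j+1) (by omega) (by omega), hclamp j (by omega) (by omega),
        hclamp (j+2) (by omega) (by omega)]
      have hbj : 0 ≤ b j := hb0 j h1 (by omega)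
      have hbj2 : 0 ≤ b (j+2) := hb0 (j+2) (by omega) h2
      have hparam : ∀ h : ℝ, 0 < h →
          b (j+1) + ε ≤ 2 * (b j + ε) / h + h * (b (j+2) + ε) := by
        intro h hh
        have h0 := hLK j h1 h2 h hh
        have hone : (1:ℝ) ≤ 2 / h + h := by
          rw [div_add' _ _ _ (ne_of_gt hh), le_div_iff₀ hh]
          nlinarith
        have e1 : ε * 1 ≤ ε * (2 / h + h) := mul_le_mul_of_nonneg_left hone hε.le
        have expand : 2 * (b j + ε) / h + h * (b (j+2) + ε)
            = (2 * b j / h + h * b (j+2)) + ε * (2 / h + h) := by ring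
        rw [expand]
        linarith
      set u := Real.sqrt (2 * (b j + ε)) with hudef
      set w := Real.sqrt (b (j+2) + ε) with hwdef
      have hu : 0 < u := Real.sqrt_pos.mpr (by linarith)
      have hw : 0 < w := Real.sqrt_pos.mpr (by linarith)
      have husq : u ^ 2 = 2 * (b j + ε) := Real.sq_sqrt (by linarith)
      have hwsq : w ^ 2 = b (j+2) + ε := Real.sq_sqrt (by linarith)
      have hb1 : b (j+1) + ε ≤ 2 * (u * w) := by
        have hp := hparam (u / w) (div_pos hu hw)
        calc b (j+1) + ε ≤ 2 * (b j + ε) / (u / w) + (u / w) * (b (j+2) + ε) := hp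
          _ = u ^ 2 / (u / w) + (u / w) * w ^ 2 := by rw [husq, hwsq]
          _ = 2 * (u * w) := by
              field_simp
              ring
      have hb1pos : 0 ≤ b (j+1) + ε := by
        have := hb0 (j+1) (by omega) (by omega); linarith
      calc (b (j+1) + ε) ^ 2 ≤ (2 * (u * w)) ^ 2 := pow_le_pow_left₀ hb1pos hb1 2
        _ = 4 * (u ^ 2 * w ^ 2) := by ring
        _ = 8 * (b j + ε) * (b (j+2) + ε) := by rw [husq, hwsq]; ring
        _ ≤ 9 * (b j + ε) * (b (j+2) + ε) := by nlinarith
    have hint := chain_interp m β hβpos hqβ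
    set Dε : ℝ := β 1 + β m ^ ((1:ℝ)/m) with hDdef
    have hDpos : 0 < Dε := by
      rw [hDdef]
      have h1 := hβpos 1
      have h2 : 0 ≤ β m ^ ((1:ℝ)/m) := Real.rpow_nonneg (hβpos m).le _
      linarith
    have hrootpow : (β m ^ ((1:ℝ)/m)) ^ (m:ℕ) = β m := by
      have hm0 : (m:ℝ) ≠ 0 := Nat.cast_ne_zero.mpr (by omega)
      rw [← Real.rpow_natCast (β m ^ ((1:ℝ)/m)) m, ← Real.rpow_mul (hβpos m).le,
        one_div, inv_mul_cancel₀ hm0, Real.rpow_one]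
    have hD1 : β 1 ≤ Dε := le_add_of_nonneg_right (Real.rpow_nonneg (hβpos m).le _)
    have hDm : β m ≤ Dε ^ m := by
      rw [← hrootpow]
      exact pow_le_pow_left₀ (Real.rpow_nonneg (hβpos m).le _)
        (le_add_of_nonneg_left (hβpos 1).le) m
    have hβD : ∀ j, 1 ≤ j → j ≤ m → β j ≤ Q * Dε ^ j := by
      intro j h1 h2
      rcases eq_or_lt_of_le hm with hm1 | hm2
      · -- m = 1
        have hj1 : j = 1 := by omega
        subst hj1
        have : β 1 ≤ Dε := hD1
        have hd1 : 0 < Dε ^ 1 := by simpa using hDpos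
        nlinarith
      · -- m ≥ 2
        have hmm : 2 ≤ m := hm2
        have h := hint j h1 h2
        obtain ⟨p, rfl⟩ : ∃ p, j = p + 1 := ⟨j - 1, by omega⟩
        obtain ⟨t, hmt⟩ : ∃ t, m = p + 1 + t := ⟨m - (p+1), by omega⟩
        have e : m - (p+1) + m * (p+1-1) = (p+1) * (m-1) := by
          subst hmt
          have e2 : p + 1 + t - 1 = p + t := by omega
          have e3 : p + 1 + t - (p + 1) = t := by omega
          have e4 : p + 1 - 1 = p := by omega
          rw [e2, e3, e4]
          ring
        have step1 : β (p+1) ^ (m-1) ≤ Q * Dε ^ (m-(p+1)) * (Dε ^ m) ^ (p+1-1) := by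
          refine le_trans h ?_
          have t1 : β 1 ^ (m-(p+1)) ≤ Dε ^ (m-(p+1)) :=
            pow_le_pow_left₀ (hβpos 1).le hD1 _
          have t2 : β m ^ (p+1-1) ≤ (Dε ^ m) ^ (p+1-1) :=
            pow_le_pow_left₀ (hβpos m).le hDm _
          have := mul_le_mul (mul_le_mul_of_nonneg_left t1 hQpos.le) t2
            (pow_nonneg (hβpos m).le _) (by positivity)
          exact this
        have step2 : Q * Dε ^ (m-(p+1)) * (Dε ^ m) ^ (p+1-1) = Q * Dε ^ ((p+1)*(m-1)) := by
          rw [← pow_mul Dε, mul_assoc, ← pow_add, e]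
        have step3 : Q * Dε ^ ((p+1)*(m-1)) ≤ (Q * Dε ^ (p+1)) ^ (m-1) := by
          rw [mul_pow, ← pow_mul Dε]
          apply mul_le_mul_of_nonneg_right (le_self_pow₀ hQ1 (by omega)) (by positivity)
        refine le_of_pow_le_pow_left₀ (by omega : m - 1 ≠ 0) (by positivity) ?_
        calc β (p+1) ^ (m-1) ≤ Q * Dε ^ (m-(p+1)) * (Dε ^ m) ^ (p+1-1) := step1
          _ = Q * Dε ^ ((p+1)*(m-1)) := step2
          _ ≤ (Q * Dε ^ (p+1)) ^ (m-1) := step3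
    -- pointwise bounds for derivatives of g
    have hD : ∀ i, 1 ≤ i → i ≤ m → ‖iteratedFDeriv ℝ i g x‖ ≤ (Q * Dε) ^ i := by
      intro i h1 h2
      calc ‖iteratedFDeriv ℝ i g x‖ ≤ b i := hble i h1 h2 x
        _ ≤ β i := by rw [hclamp i h1 h2]; linarith
        _ ≤ Q * Dε ^ i := hβD i h1 h2
        _ ≤ Q ^ i * Dε ^ i := mul_le_mul_of_nonneg_right
            (le_self_pow₀ hQ1 (by omega)) (by positivity)
        _ = (Q * Dε) ^ i := (mul_pow _ _ _).symm
    -- bounds for derivatives of the shifted outer function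
    have hc0 : ∀ k ∈ Finset.Icc 1 (m+2), 0 ≤ c k :=
      fun k hk => le_trans (abs_nonneg _) (hfc k hk 0)
    have houter : ∀ i, i ≤ m →
        ‖iteratedFDeriv ℝ i (fun y => f y - f (g x)) (g x)‖ ≤ 1 := by
      intro i hi
      match i with
      | 0 =>
        rw [norm_iteratedFDeriv_zero]
        simp
      | (i+1) =>
        rw [iteratedFDeriv_sub_const, norm_iteratedFDeriv_eq_norm_iteratedDeriv]
        have hmem : (i+1) ∈ Finset.Icc 1 (m+2) := Finset.mem_Icc.mpr ⟨by omega, by omega⟩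
        have h1 := hfc (i+1) hmem (g x)
        have h2 : c (i+1) ≤ 1 :=
          le_trans (Finset.single_le_sum hc0 hmem) hsum
        rw [Real.norm_eq_abs]
        linarith
    -- smoothness of the shifted outer function
    have hfs : ContDiff ℝ (m : WithTop ℕ∞) (fun y => f y - f (g x)) := by
      apply ContDiff.sub _ contDiff_const
      apply hf.of_le
      exact le_add_of_nonneg_right zero_le
    have hcomp := norm_iteratedFDeriv_comp_le (n := m) (N := (m : WithTop ℕ∞))
      hfs hg le_rfl x houter hD
    have hrw : ‖iteratedFDeriv ℝ m (fun y => f (g y)) x‖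
        = ‖iteratedFDeriv ℝ m ((fun y => f y - f (g x)) ∘ g) x‖ := by
      have hcc : (fun y => f y - f (g x)) ∘ g = fun y => f (g y) - f (g x) := rfl
      rw [hcc, iteratedFDeriv_sub_const' _ _ hm]
    rw [hrw]
    refine le_trans hcomp ?_
    -- numeric wrap-up
    have hDe : Dε ^ m ≤ 2 ^ m * ((b 1 + ε) ^ m + (b m + ε)) := by
      have h2p := two_pow_bound m (β 1) (β m ^ ((1:ℝ)/m)) (hβpos 1).le
        (Real.rpow_nonneg (hβpos m).le _)
      rw [hrootpow] at h2p
      rw [hDdef] at *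
      calc (β 1 + β m ^ ((1:ℝ)/m)) ^ m ≤ 2 ^ m * (β 1 ^ m + β m) := h2p
        _ = 2 ^ m * ((b 1 + ε) ^ m + (b m + ε)) := by
            rw [hclamp 1 le_rfl hm, hclamp m hm le_rfl]
    calc (m.factorial : ℝ) * 1 * (Q * Dε) ^ m = (m.factorial : ℝ) * (Q ^ m * Dε ^ m) := by rw [mul_pow]; ring
      _ ≤ (m.factorial : ℝ) * (Q ^ m * (2 ^ m * ((b 1 + ε) ^ m + (b m + ε)))) := by
          apply mul_le_mul_of_nonneg_left _ (by positivity)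
          exact mul_le_mul_of_nonneg_left hDe (by positivity)
      _ = C * ((b 1 + ε) ^ m + (b m + ε)) := by
          rw [hCdef, hQdef, ← pow_mul]
          ring
  -- pass to the limit ε → 0
  have hlim : ‖iteratedFDeriv ℝ m (fun y => f (g y)) x‖ ≤ C * (b 1 ^ m + b m) := by
    have t1 : Filter.Tendsto (fun ε : ℝ => C * ((b 1 + ε) ^ m + (b m + ε)))
        (nhdsWithin 0 (Set.Ioi 0)) (nhds (C * ((b 1 + 0) ^ m + (b m + 0)))) := by
      apply Filter.Tendsto.mono_left _ nhdsWithin_le_nhds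
      have hcont : Continuous (fun ε : ℝ => C * ((b 1 + ε) ^ m + (b m + ε))) :=
        continuous_const.mul (((continuous_const.add continuous_id).pow m).add
          (continuous_const.add continuous_id))
      exact hcont.tendsto 0
    simp only [add_zero] at t1
    exact ge_of_tendsto t1 (eventually_nhdsWithin_of_forall fun ε hε => main ε hε)
  refine le_trans hlim ?_
  apply mul_le_mul_of_nonneg_left _ (by positivity)
  have hM1 : 0 ≤ M 1 := le_trans (hb0 1 le_rfl hm) (hbM 1 le_rfl hm)
  exact add_le_add (pow_le_pow_left₀ (hb0 1 le_rfl hm) (hbM 1 le_rfl hm) m)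
    (hbM m hm le_rfl)
end

section
/- Let d ≥ 1, m ≥ 0 be integers and α ∈ (0,1). Let f : ℝ → ℝ be (m+2)-times continuously differentiable with Σ_{k=1}^{m+2} ‖f^{(k)}‖_{L^∞} ≤ 1, and let g : ℝ^d → ℝ be m-times continuously differentiable with ‖∇^j g‖_{L^∞} < ∞ for 1 ≤ j ≤ m, [g]_{Ċ^α} < ∞ and [∇^m g]_{Ċ^α} < ∞. Then there is a constant C depending only on d, m and α such that [∇^m (f ∘ g)]_{Ċ^α} ≤ C ( [g]_{Ċ^α}^{(m+α)/α} + [∇^m g]_{Ċ^α} ). -/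
set_option linter.unusedSectionVars false
set_option linter.unusedVariables false
set_option maxHeartbeats 2000000

open Set

section chb_aux
variable {E F : Type*} [NormedAddCommGroup E] [NormedSpace ℝ E]
  [NormedAddCommGroup F] [NormedSpace ℝ F]

lemma chb_fderiv_comp_add_right (h : E → F) (w x : E) :
    fderiv ℝ (fun y => h (y + w)) x = fderiv ℝ h (x + w) := by
  by_cases hd : DifferentiableAt ℝ h (x + w)
  · have h1 : HasFDerivAt (fun y : E => y + w) (ContinuousLinearMap.id ℝ E) x :=
      (hasFDerivAt_id x).add_const w
    have := (hd.hasFDerivAt.comp x h1).fderiv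
    simpa [Function.comp_def] using this
  · rw [fderiv_zero_of_not_differentiableAt hd, fderiv_zero_of_not_differentiableAt]
    intro contra
    have hc : DifferentiableAt ℝ (fun y => h (y + w)) (x + w - w) := by
      simpa using contra
    have : DifferentiableAt ℝ ((fun y => h (y + w)) ∘ (fun z : E => z - w)) (x + w) :=
      hc.comp (x + w) (differentiableAt_id.sub_const w)
    have : DifferentiableAt ℝ (fun z => h (z - w + w)) (x + w) := this
    simpa using hd (by simpa using this)

lemma chb_iteratedFDeriv_comp_add_right (j : ℕ) (h : E → F) (w x : E) :
    iteratedFDeriv ℝ j (fun y => h (y + w)) x = iteratedFDeriv ℝ j h (x + w) := by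
  induction j generalizing x with
  | zero => ext v; simp
  | succ j IH =>
    ext v
    rw [iteratedFDeriv_succ_apply_left, iteratedFDeriv_succ_apply_left]
    have e1 : iteratedFDeriv ℝ j (fun y => h (y + w)) =
        fun y => iteratedFDeriv ℝ j h (y + w) := funext fun y => IH y
    rw [e1, chb_fderiv_comp_add_right (iteratedFDeriv ℝ j h) w x]

/-- Mixed finite differences. -/
def chb_mdiff : (j : ℕ) → (Fin j → E) → (E → F) → (E → F)
  | 0, _, h => h
  | (j+1), v, h => chb_mdiff j (Fin.tail v) (fun x => h (x + v 0) - h x)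

lemma chb_norm_mdiff_le (j : ℕ) (v : Fin j → E) (h : E → F) (B : ℝ)
    (hB : ∀ x, ‖h x‖ ≤ B) (x : E) : ‖chb_mdiff j v h x‖ ≤ 2 ^ j * B := by
  induction j generalizing h B with
  | zero => simpa [chb_mdiff] using hB x
  | succ j IH =>
    have : ∀ y, ‖h (y + v 0) - h y‖ ≤ 2 * B := fun y =>
      (norm_sub_le _ _).trans (by linarith [hB (y + v 0), hB y])
    have := IH (Fin.tail v) _ (2 * B) this
    calc ‖chb_mdiff (j+1) v h x‖ ≤ 2 ^ j * (2 * B) := this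
    _ = 2 ^ (j+1) * B := by ring

lemma chb_contDiff_shift {j : ℕ} {h : E → F} (hsm : ContDiff ℝ (j:ℕ∞) h) (w : E) :
    ContDiff ℝ (j:ℕ∞) (fun y => h (y + w)) :=
  hsm.comp (contDiff_id.add contDiff_const)

lemma chb_iteratedFDeriv_shift_sub (j : ℕ) {h : E → F} (hsm : ContDiff ℝ (j:ℕ∞) h) (w x : E) :
    iteratedFDeriv ℝ j (fun y => h (y + w) - h y) x
      = iteratedFDeriv ℝ j h (x + w) - iteratedFDeriv ℝ j h x := by
  have e : (fun y => h (y + w) - h y) = (fun y => h (y + w)) + (-h) := by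
    funext y; simp [sub_eq_add_neg]
  rw [e, iteratedFDeriv_add_apply (by exact_mod_cast (chb_contDiff_shift hsm w).contDiffAt)
      (by exact_mod_cast (hsm.neg.contDiffAt : ContDiffAt ℝ (j:ℕ∞) (-h) x)), iteratedFDeriv_neg_apply,
    chb_iteratedFDeriv_comp_add_right, sub_eq_add_neg]

def chb_A : ℕ → ℝ
  | 0 => 0
  | (j+1) => chb_A j * j + 1

lemma chb_A_nonneg (j : ℕ) : 0 ≤ chb_A j := by
  induction j with
  | zero => simp [chb_A]
  | succ j IH => simp only [chb_A]; positivity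

lemma chb_mdiff_error : ∀ (j : ℕ) (h : E → F), ContDiff ℝ (j:ℕ∞) h → ∀ (ω hh : ℝ), 0 ≤ ω → 0 ≤ hh →
    (∀ y z : E, ‖y - z‖ ≤ j * hh →
      ‖iteratedFDeriv ℝ j h y - iteratedFDeriv ℝ j h z‖ ≤ ω) →
    ∀ (v : Fin j → E), (∀ i, ‖v i‖ ≤ hh) → ∀ x,
    ‖chb_mdiff j v h x - iteratedFDeriv ℝ j h x v‖ ≤ chb_A j * ω * hh ^ j := by
  intro j
  induction j with
  | zero =>
    intro h _ ω hh _ _ _ v _ x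
    simp [chb_mdiff, chb_A]
  | succ j IH =>
    intro h hsm ω hh hω hhh hmod v hv x
    have hsmj : ContDiff ℝ (j:ℕ∞) h := hsm.of_le (by exact_mod_cast Nat.le_succ j)
    set w := v 0 with hw
    have hwh : ‖w‖ ≤ hh := hv 0
    set G : E → F := fun y => h (y + w) - h y with hG
    have hsmG : ContDiff ℝ (j:ℕ∞) G := (chb_contDiff_shift hsmj w).sub hsmj
    have hDjG : ∀ u, iteratedFDeriv ℝ j G u
        = iteratedFDeriv ℝ j h (u + w) - iteratedFDeriv ℝ j h u :=
      fun u => chb_iteratedFDeriv_shift_sub j hsmj w u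
    have hdiff : ∀ u : E, DifferentiableAt ℝ (iteratedFDeriv ℝ j h) u := by
      intro u
      exact (hsm.differentiable_iteratedFDeriv (by exact_mod_cast Nat.lt_succ_self j)) u
    set φ : E → (E →L[ℝ] (ContinuousMultilinearMap ℝ (fun _ : Fin j => E) F)) :=
      fderiv ℝ (iteratedFDeriv ℝ j h) with hφ
    have hφnorm : ∀ u1 u2 : E, ‖φ u1 - φ u2‖
        = ‖iteratedFDeriv ℝ (j+1) h u1 - iteratedFDeriv ℝ (j+1) h u2‖ := by
      intro u1 u2
      have e : ∀ u, φ u = (continuousMultilinearCurryLeftEquiv ℝ (fun _ : Fin (j+1) => E) F)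
          (iteratedFDeriv ℝ (j+1) h u) := by
        intro u
        rw [hφ, fderiv_iteratedFDeriv]
        rfl
      rw [e, e, ← LinearIsometryEquiv.map_sub, LinearIsometryEquiv.norm_map]
    -- modulus of the j-th derivative of G
    have hmodG : ∀ y z : E, ‖y - z‖ ≤ j * hh →
        ‖iteratedFDeriv ℝ j G y - iteratedFDeriv ℝ j G z‖ ≤ ω * (j * hh) := by
      intro y z hyz
      have hdiffG : ∀ u ∈ (univ : Set E),
          DifferentiableAt ℝ (fun u => iteratedFDeriv ℝ j h (u + w) - iteratedFDeriv ℝ j h u) u := by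
        intro u _
        exact (((hdiff (u + w)).comp u (differentiableAt_id.add_const w))).sub (hdiff u)
      have hbound : ∀ u ∈ (univ : Set E),
          ‖fderiv ℝ (fun u => iteratedFDeriv ℝ j h (u + w) - iteratedFDeriv ℝ j h u) u‖ ≤ ω := by
        intro u _
        have d1 : DifferentiableAt ℝ (fun u : E => iteratedFDeriv ℝ j h (u + w)) u :=
          (hdiff (u + w)).comp u (differentiableAt_id.add_const w)
        have e1 : fderiv ℝ (fun u => iteratedFDeriv ℝ j h (u + w) - iteratedFDeriv ℝ j h u) u
            = φ (u + w) - φ u := by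
          rw [fderiv_fun_sub d1 (hdiff u)]
          rw [chb_fderiv_comp_add_right (iteratedFDeriv ℝ j h) w u]
        rw [e1, hφnorm]
        apply hmod
        have : ‖u + w - u‖ = ‖w‖ := by congr 1; abel
        rw [this]
        push_cast
        nlinarith [hwh, hhh, Nat.cast_nonneg (α := ℝ) j]
      have := Convex.norm_image_sub_le_of_norm_fderiv_le hdiffG hbound convex_univ
        (mem_univ z) (mem_univ y)
      calc ‖iteratedFDeriv ℝ j G y - iteratedFDeriv ℝ j G z‖
          = ‖(fun u => iteratedFDeriv ℝ j h (u + w) - iteratedFDeriv ℝ j h u) y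
            - (fun u => iteratedFDeriv ℝ j h (u + w) - iteratedFDeriv ℝ j h u) z‖ := by
            rw [hDjG y, hDjG z]
        _ ≤ ω * ‖y - z‖ := this
        _ ≤ ω * (j * hh) := by
            apply mul_le_mul_of_nonneg_left hyz hω
    -- apply IH to G
    have hEG := IH G hsmG (ω * (j * hh)) hh (by positivity) hhh hmodG (Fin.tail v)
      (fun i => hv i.succ) x
    -- correction term
    have hkey : ‖iteratedFDeriv ℝ j h (x + w) - iteratedFDeriv ℝ j h x - φ x w‖ ≤ ω * hh := by
      have hball : ∀ u ∈ Metric.closedBall x hh, DifferentiableAt ℝ (iteratedFDeriv ℝ j h) u :=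
        fun u _ => hdiff u
      have hbound : ∀ u ∈ Metric.closedBall x hh, ‖φ u - φ x‖ ≤ ω := by
        intro u hu
        rw [hφnorm]
        apply hmod
        have : ‖u - x‖ ≤ hh := by
          rw [← dist_eq_norm]; exact Metric.mem_closedBall.1 hu
        push_cast
        nlinarith [this, hhh, Nat.cast_nonneg (α := ℝ) j]
      have hys : x + w ∈ Metric.closedBall x hh := by
        rw [Metric.mem_closedBall, dist_eq_norm]
        simpa using hwh
      have := Convex.norm_image_sub_le_of_norm_fderiv_le' hball hbound
        (convex_closedBall x hh) (Metric.mem_closedBall_self hhh) hys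
      calc ‖iteratedFDeriv ℝ j h (x + w) - iteratedFDeriv ℝ j h x - φ x w‖
          = ‖iteratedFDeriv ℝ j h (x + w) - iteratedFDeriv ℝ j h x - φ x (x + w - x)‖ := by
            rw [show x + w - x = w by abel]
        _ ≤ ω * ‖x + w - x‖ := this
        _ ≤ ω * hh := by
            apply mul_le_mul_of_nonneg_left _ hω
            have : ‖x + w - x‖ = ‖w‖ := by congr 1; abel
            rw [this]; exact hwh
    have hprod : ∏ i : Fin j, ‖Fin.tail v i‖ ≤ hh ^ j := by
      calc ∏ i : Fin j, ‖Fin.tail v i‖ ≤ ∏ _i : Fin j, hh :=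
        Finset.prod_le_prod (fun i _ => norm_nonneg _) (fun i _ => hv i.succ)
      _ = hh ^ j := by simp
    have hcorr : ‖iteratedFDeriv ℝ j G x (Fin.tail v) - iteratedFDeriv ℝ (j+1) h x v‖
        ≤ ω * hh * hh ^ j := by
      have e1 : iteratedFDeriv ℝ (j+1) h x v = (φ x (v 0)) (Fin.tail v) := by
        rw [iteratedFDeriv_succ_apply_left]
      have e2 : iteratedFDeriv ℝ j G x (Fin.tail v) - iteratedFDeriv ℝ (j+1) h x v
          = (iteratedFDeriv ℝ j h (x + w) - iteratedFDeriv ℝ j h x - φ x w) (Fin.tail v) := by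
        rw [e1, hDjG x, ← hw]
        simp [ContinuousMultilinearMap.sub_apply]
      rw [e2]
      calc ‖(iteratedFDeriv ℝ j h (x + w) - iteratedFDeriv ℝ j h x - φ x w) (Fin.tail v)‖
          ≤ ‖iteratedFDeriv ℝ j h (x + w) - iteratedFDeriv ℝ j h x - φ x w‖
            * ∏ i : Fin j, ‖Fin.tail v i‖ := ContinuousMultilinearMap.le_opNorm _ _
        _ ≤ (ω * hh) * hh ^ j := by
            apply mul_le_mul hkey hprod (Finset.prod_nonneg (fun i _ => norm_nonneg _))
              (by positivity)
    have emd : chb_mdiff (j+1) v h x = chb_mdiff j (Fin.tail v) G x := rfl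
    calc ‖chb_mdiff (j+1) v h x - iteratedFDeriv ℝ (j+1) h x v‖
        = ‖(chb_mdiff j (Fin.tail v) G x - iteratedFDeriv ℝ j G x (Fin.tail v))
          + (iteratedFDeriv ℝ j G x (Fin.tail v) - iteratedFDeriv ℝ (j+1) h x v)‖ := by
          rw [emd]; congr 1; abel
      _ ≤ ‖chb_mdiff j (Fin.tail v) G x - iteratedFDeriv ℝ j G x (Fin.tail v)‖
          + ‖iteratedFDeriv ℝ j G x (Fin.tail v) - iteratedFDeriv ℝ (j+1) h x v‖ :=
          norm_add_le _ _
      _ ≤ chb_A j * (ω * (j * hh)) * hh ^ j + ω * hh * hh ^ j := add_le_add hEG hcorr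
      _ = chb_A (j+1) * ω * hh ^ (j+1) := by
          simp only [chb_A]
          ring

lemma chb_A_mono : Monotone chb_A := by
  apply monotone_nat_of_le_succ
  intro j
  match j with
  | 0 => simp [chb_A]
  | (n+1) =>
    have h1 := chb_A_nonneg n
    have h3 : (0:ℝ) ≤ (n:ℝ) := Nat.cast_nonneg n
    simp only [chb_A]
    push_cast
    nlinarith [mul_nonneg (mul_nonneg h1 h3) h3, mul_nonneg h1 h3]

lemma chb_opnorm_le_of_diag (j : ℕ) (T : ContinuousMultilinearMap ℝ (fun _ : Fin j => E) F)
    (hh C : ℝ) (hhh : 0 < hh) (hC : 0 ≤ C)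
    (hT : ∀ v : Fin j → E, (∀ i, ‖v i‖ ≤ hh) → ‖T v‖ ≤ C) :
    ‖T‖ ≤ C / hh ^ j := by
  apply T.opNorm_le_bound (by positivity)
  intro v
  by_cases hz : ∃ i, v i = 0
  · obtain ⟨i, hi⟩ := hz
    rw [T.map_coord_zero i hi]
    have : ∏ i, ‖v i‖ = 0 := Finset.prod_eq_zero (Finset.mem_univ i) (by simp [hi])
    simp [this]
  · push_neg at hz
    have hvn : ∀ i, 0 < ‖v i‖ := fun i => norm_pos_iff.2 (hz i)
    set w : Fin j → E := fun i => (hh / ‖v i‖) • v i with hwdef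
    have hwn : ∀ i, ‖w i‖ ≤ hh := by
      intro i
      rw [hwdef]
      simp only [norm_smul, Real.norm_eq_abs, abs_div, abs_of_pos hhh, abs_of_pos (hvn i)]
      rw [div_mul_cancel₀]
      exact (hvn i).ne'
    have hveq : v = fun i => (‖v i‖ / hh) • w i := by
      funext i
      rw [hwdef, smul_smul]
      have h1 : ‖v i‖ ≠ 0 := (hvn i).ne'
      have h2 : hh ≠ 0 := hhh.ne'
      rw [show (‖v i‖ / hh) * (hh / ‖v i‖) = 1 by field_simp, one_smul]
    have : T v = (∏ i, (‖v i‖ / hh)) • T w := by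
      conv_lhs => rw [hveq]
      exact T.map_smul_univ _ _
    rw [this, norm_smul, Real.norm_eq_abs]
    have habs : |∏ i, (‖v i‖ / hh)| = ∏ i, (‖v i‖ / hh) := abs_of_nonneg (by positivity)
    rw [habs]
    have hTw := hT w hwn
    calc (∏ i, (‖v i‖ / hh)) * ‖T w‖ ≤ (∏ i, (‖v i‖ / hh)) * C := by
          apply mul_le_mul_of_nonneg_left hTw (by positivity)
      _ = C / hh ^ j * ∏ i, ‖v i‖ := by
          rw [Finset.prod_div_distrib, Finset.prod_const]
          simp only [Finset.card_univ, Fintype.card_fin]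
          ring

lemma chb_S_bound (j : ℕ) (hj : 1 ≤ j) {g : E → F} (hsm : ContDiff ℝ (j:ℕ∞) g)
    (B ω hh : ℝ) (hB : 0 ≤ B) (hω : 0 ≤ ω) (hhh : 0 < hh)
    (hsmall : ∀ (x w : E), ‖w‖ ≤ hh → ‖g (x + w) - g x‖ ≤ B)
    (hmod : ∀ y z : E, ‖y - z‖ ≤ j * hh →
      ‖iteratedFDeriv ℝ j g y - iteratedFDeriv ℝ j g z‖ ≤ ω) (x : E) :
    ‖iteratedFDeriv ℝ j g x‖ ≤ (2 ^ j * B + chb_A j * ω * hh ^ j) / hh ^ j := by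
  apply chb_opnorm_le_of_diag _ _ hh _ hhh (by have := chb_A_nonneg j; positivity)
  intro v hv
  obtain ⟨j', rfl⟩ : ∃ j', j = j' + 1 := ⟨j - 1, by omega⟩
  have herr := chb_mdiff_error (j' + 1) g hsm ω hh hω hhh.le hmod v hv x
  have hmd : ‖chb_mdiff (j' + 1) v g x‖ ≤ 2 ^ j' * B := by
    have : ∀ y, ‖g (y + v 0) - g y‖ ≤ B := fun y => hsmall y (v 0) (hv 0)
    exact chb_norm_mdiff_le j' (Fin.tail v) _ B this x
  have h2 : (2:ℝ) ^ j' ≤ 2 ^ (j' + 1) := by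
    apply pow_le_pow_right₀ one_le_two (Nat.le_succ j')
  calc ‖iteratedFDeriv ℝ (j'+1) g x v‖
      ≤ ‖chb_mdiff (j'+1) v g x‖
        + ‖chb_mdiff (j'+1) v g x - iteratedFDeriv ℝ (j'+1) g x v‖ := by
        have := norm_sub_norm_le (chb_mdiff (j'+1) v g x)
          (chb_mdiff (j'+1) v g x - iteratedFDeriv ℝ (j'+1) g x v)
        have e : chb_mdiff (j'+1) v g x - (chb_mdiff (j'+1) v g x
            - iteratedFDeriv ℝ (j'+1) g x v) = iteratedFDeriv ℝ (j'+1) g x v := by abel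
        calc ‖iteratedFDeriv ℝ (j'+1) g x v‖
            = ‖chb_mdiff (j'+1) v g x - (chb_mdiff (j'+1) v g x
              - iteratedFDeriv ℝ (j'+1) g x v)‖ := by rw [e]
          _ ≤ _ := norm_sub_le _ _
    _ ≤ 2 ^ j' * B + chb_A (j'+1) * ω * hh ^ (j'+1) := add_le_add hmd herr
    _ ≤ 2 ^ (j'+1) * B + chb_A (j'+1) * ω * hh ^ (j'+1) := by nlinarith

lemma chb_interp_aux (m : ℕ) (hm : 1 ≤ m) (α : ℝ) (hα : α ∈ Ioo (0:ℝ) 1) :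
    ∀ k : ℕ, ∃ s : ℝ, 0 < s ∧ ∀ (g : E → ℝ) (Kg Km : ℝ), ContDiff ℝ (m:ℕ∞) g →
    0 ≤ Kg → 0 ≤ Km →
    (∀ x y : E, |g x - g y| ≤ Kg * ‖x - y‖ ^ α) →
    (∀ x y : E, ‖iteratedFDeriv ℝ m g x - iteratedFDeriv ℝ m g y‖ ≤ Km * ‖x - y‖ ^ α) →
    ∀ j : ℕ, 1 ≤ j → m = j + k → ∀ hh : ℝ, 0 < hh → ∀ x,
    ‖iteratedFDeriv ℝ j g x‖
      ≤ s * (Kg * hh ^ (α - (j:ℝ)) + Km * hh ^ ((m:ℝ) + α - (j:ℝ))) := by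
  obtain ⟨hα0, hα1⟩ := hα
  intro k
  induction k with
  | zero =>
    refine ⟨2 ^ m + chb_A m * m + 1, by have := chb_A_nonneg m; positivity, ?_⟩
    intro g Kg Km hsm hKg hKm hHol hHm j hj1 hjk hh hhh x
    obtain rfl : j = m := by omega
    have hsmall : ∀ (x w : E), ‖w‖ ≤ hh → ‖g (x + w) - g x‖ ≤ Kg * hh ^ α := by
      intro x w hw
      rw [Real.norm_eq_abs]
      calc |g (x + w) - g x| ≤ Kg * ‖x + w - x‖ ^ α := hHol _ _
        _ ≤ Kg * hh ^ α := by
            apply mul_le_mul_of_nonneg_left _ hKg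
            apply Real.rpow_le_rpow (norm_nonneg _) _ hα0.le
            rw [show x + w - x = w by abel]; exact hw
    have hmod : ∀ y z : E, ‖y - z‖ ≤ j * hh →
        ‖iteratedFDeriv ℝ j g y - iteratedFDeriv ℝ j g z‖ ≤ Km * ((j:ℝ) * hh) ^ α := by
      intro y z hyz
      calc ‖iteratedFDeriv ℝ j g y - iteratedFDeriv ℝ j g z‖ ≤ Km * ‖y - z‖ ^ α := hHm _ _
        _ ≤ Km * ((j:ℝ) * hh) ^ α := by
            apply mul_le_mul_of_nonneg_left _ hKm
            exact Real.rpow_le_rpow (norm_nonneg _) hyz hα0.le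
    have hres := chb_S_bound j hj1 hsm (Kg * hh ^ α) (Km * ((j:ℝ) * hh) ^ α) hh
      (by positivity) (by positivity) hhh hsmall hmod x
    refine hres.trans ?_
    rw [div_le_iff₀ (by positivity)]
    have e1 : hh ^ (α - (j:ℝ)) * hh ^ (j:ℕ) = hh ^ α := by
      rw [← Real.rpow_natCast hh j, ← Real.rpow_add hhh]; congr 1; ring
    have e2 : hh ^ ((j:ℝ) + α - (j:ℝ)) = hh ^ α := by congr 1; ring
    have e3 : ((j:ℝ) * hh) ^ α = (j:ℝ) ^ α * hh ^ α := Real.mul_rpow (Nat.cast_nonneg j) hhh.le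
    have e4 : ((j:ℝ)) ^ α ≤ (j:ℝ) := by
      calc ((j:ℝ)) ^ α ≤ ((j:ℝ)) ^ (1:ℝ) :=
        Real.rpow_le_rpow_of_exponent_le (by exact_mod_cast hj1) hα1.le
      _ = (j:ℝ) := Real.rpow_one _
    rw [e2, e3]
    have hP : (0:ℝ) ≤ hh ^ α := Real.rpow_nonneg hhh.le α
    have hQ : (0:ℝ) < hh ^ (j:ℕ) := by positivity
    have hja : (0:ℝ) ≤ (j:ℝ) ^ α := Real.rpow_nonneg (Nat.cast_nonneg j) α
    have hAm := chb_A_nonneg j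
    calc 2 ^ j * (Kg * hh ^ α) + chb_A j * (Km * ((j:ℝ) ^ α * hh ^ α)) * hh ^ (j:ℕ)
        ≤ (2 ^ j + chb_A j * (j:ℝ) + 1) * (Kg * hh ^ α + Km * hh ^ α * hh ^ (j:ℕ)) := by
          have hd : (0:ℝ) ≤ (j:ℝ) - (j:ℝ) ^ α := by linarith
          nlinarith [mul_nonneg (mul_nonneg (mul_nonneg (mul_nonneg hAm hd) hKm) hP) hQ.le,
            mul_nonneg (by positivity : (0:ℝ) ≤ 2 ^ j) (mul_nonneg (mul_nonneg hKm hP) hQ.le),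
            mul_nonneg hKg hP, mul_nonneg (mul_nonneg hKm hP) hQ.le,
            mul_nonneg (mul_nonneg (mul_nonneg hAm hKg) hP) hQ.le,
            mul_nonneg (mul_nonneg hAm hKg) hP,
            mul_nonneg (mul_nonneg (Nat.cast_nonneg (α := ℝ) j) (mul_nonneg hAm hKg)) hP,
            mul_nonneg (mul_nonneg (mul_nonneg (Nat.cast_nonneg (α := ℝ) j) (mul_nonneg hAm hKg)) hP) hQ.le]
      _ = (2 ^ j + chb_A j * (j:ℝ) + 1) * (Kg * hh ^ (α - (j:ℝ)) + Km * hh ^ α) * hh ^ (j:ℕ) := by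
          rw [← e1]; ring
  | succ k IH =>
    obtain ⟨s, hs, hsP⟩ := IH
    refine ⟨2 ^ m + chb_A m * m * s + 1, by have := chb_A_nonneg m; positivity, ?_⟩
    intro g Kg Km hsm hKg hKm hHol hHm j hj1 hjk hh hhh x
    have hjm : j + 1 ≤ m := by omega
    have hIH := hsP g Kg Km hsm hKg hKm hHol hHm (j+1) (by omega) (by omega) hh hhh
    push_cast at hIH
    set T1 : ℝ := Kg * hh ^ (α - ((j:ℝ)+1)) + Km * hh ^ ((m:ℝ) + α - ((j:ℝ)+1)) with hT1
    have hT1n : 0 ≤ T1 := by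
      have := Real.rpow_nonneg hhh.le (α - ((j:ℝ)+1))
      have := Real.rpow_nonneg hhh.le ((m:ℝ) + α - ((j:ℝ)+1))
      positivity
    have hsmall : ∀ (x w : E), ‖w‖ ≤ hh → ‖g (x + w) - g x‖ ≤ Kg * hh ^ α := by
      intro x w hw
      rw [Real.norm_eq_abs]
      calc |g (x + w) - g x| ≤ Kg * ‖x + w - x‖ ^ α := hHol _ _
        _ ≤ Kg * hh ^ α := by
            apply mul_le_mul_of_nonneg_left _ hKg
            apply Real.rpow_le_rpow (norm_nonneg _) _ hα0.le
            rw [show x + w - x = w by abel]; exact hw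
    have hdiff : ∀ u : E, DifferentiableAt ℝ (iteratedFDeriv ℝ j g) u := by
      intro u
      exact hsm.differentiable_iteratedFDeriv (by exact_mod_cast hjm) u
    have hmod : ∀ y z : E, ‖y - z‖ ≤ j * hh →
        ‖iteratedFDeriv ℝ j g y - iteratedFDeriv ℝ j g z‖ ≤ s * T1 * ((j:ℝ) * hh) := by
      intro y z hyz
      have hbound : ∀ u ∈ (univ : Set E), ‖fderiv ℝ (iteratedFDeriv ℝ j g) u‖ ≤ s * T1 := by
        intro u _
        rw [norm_fderiv_iteratedFDeriv]
        exact hIH u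
      have := Convex.norm_image_sub_le_of_norm_fderiv_le (fun u _ => hdiff u) hbound
        convex_univ (mem_univ z) (mem_univ y)
      refine this.trans ?_
      apply mul_le_mul_of_nonneg_left hyz (by positivity)
    have hres := chb_S_bound j hj1 (hsm.of_le (by exact_mod_cast (by omega : j ≤ m)))
      (Kg * hh ^ α) (s * T1 * ((j:ℝ) * hh)) hh (by positivity)
      (by positivity) hhh hsmall hmod x
    refine hres.trans ?_
    rw [div_le_iff₀ (by positivity)]
    -- algebraic identities
    have e1 : hh ^ (α - (j:ℝ)) * hh ^ (j:ℕ) = hh ^ α := by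
      rw [← Real.rpow_natCast hh j, ← Real.rpow_add hhh]; congr 1; ring
    have e2 : hh ^ ((m:ℝ) + α - (j:ℝ)) * hh ^ (j:ℕ) = hh ^ ((m:ℝ) + α) := by
      rw [← Real.rpow_natCast hh j, ← Real.rpow_add hhh]; congr 1; ring
    have e3 : hh ^ (α - ((j:ℝ)+1)) * hh * hh ^ (j:ℕ) = hh ^ α := by
      rw [← Real.rpow_natCast hh j]
      nth_rewrite 2 [← Real.rpow_one hh]
      rw [← Real.rpow_add hhh, ← Real.rpow_add hhh]; congr 1; ring
    have e4 : hh ^ ((m:ℝ) + α - ((j:ℝ)+1)) * hh * hh ^ (j:ℕ) = hh ^ ((m:ℝ) + α) := by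
      rw [← Real.rpow_natCast hh j]
      nth_rewrite 2 [← Real.rpow_one hh]
      rw [← Real.rpow_add hhh, ← Real.rpow_add hhh]; congr 1; ring
    set P := hh ^ α with hP
    set Q := hh ^ ((m:ℝ) + α) with hQ
    have hPn : 0 ≤ P := Real.rpow_nonneg hhh.le α
    have hQn : 0 ≤ Q := Real.rpow_nonneg hhh.le _
    have hT : 0 ≤ Kg * P + Km * Q := by positivity
    -- expand LHS
    have lhs_eq : 2 ^ j * (Kg * P) + chb_A j * (s * T1 * ((j:ℝ) * hh)) * hh ^ (j:ℕ)
        = 2 ^ j * (Kg * P) + chb_A j * (j:ℝ) * s * (Kg * P + Km * Q) := by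
      rw [hT1]
      have : (Kg * hh ^ (α - ((j:ℝ)+1)) + Km * hh ^ ((m:ℝ) + α - ((j:ℝ)+1))) * hh * hh ^ (j:ℕ)
          = Kg * P + Km * Q := by
        rw [← e3, ← e4]; ring
      calc 2 ^ j * (Kg * P) + chb_A j * (s * (Kg * hh ^ (α - ((j:ℝ)+1))
            + Km * hh ^ ((m:ℝ) + α - ((j:ℝ)+1))) * ((j:ℝ) * hh)) * hh ^ (j:ℕ)
          = 2 ^ j * (Kg * P) + chb_A j * (j:ℝ) * s * ((Kg * hh ^ (α - ((j:ℝ)+1))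
            + Km * hh ^ ((m:ℝ) + α - ((j:ℝ)+1))) * hh * hh ^ (j:ℕ)) := by ring
        _ = _ := by rw [this]
    -- expand RHS
    have rhs_eq : (2 ^ m + chb_A m * m * s + 1)
        * (Kg * hh ^ (α - (j:ℝ)) + Km * hh ^ ((m:ℝ) + α - (j:ℝ))) * hh ^ (j:ℕ)
        = (2 ^ m + chb_A m * m * s + 1) * (Kg * P + Km * Q) := by
      rw [← e1, ← e2]; ring
    rw [lhs_eq, rhs_eq]
    have h2j : (2:ℝ) ^ j ≤ 2 ^ m := pow_le_pow_right₀ one_le_two (by omega)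
    have hAj : chb_A j * (j:ℝ) ≤ chb_A m * (m:ℝ) := by
      apply mul_le_mul (chb_A_mono (by omega)) (by exact_mod_cast (by omega : j ≤ m))
        (Nat.cast_nonneg j) (chb_A_nonneg m)
    have hKgP : 0 ≤ Kg * P := by positivity
    nlinarith [mul_le_mul_of_nonneg_right h2j hKgP,
      mul_le_mul_of_nonneg_right (mul_le_mul_of_nonneg_right hAj hs.le) hT,
      mul_nonneg (by positivity : (0:ℝ) ≤ 2 ^ m) (mul_nonneg hKm hQn),
      mul_nonneg hKm hQn, hT]

/-- Uniform-in-`j` interpolation bound. -/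
lemma chb_interp (m : ℕ) (hm : 1 ≤ m) (α : ℝ) (hα : α ∈ Ioo (0:ℝ) 1) :
    ∃ s : ℝ, 0 < s ∧ ∀ (g : E → ℝ) (Kg Km : ℝ), ContDiff ℝ (m:ℕ∞) g →
    0 ≤ Kg → 0 ≤ Km →
    (∀ x y : E, |g x - g y| ≤ Kg * ‖x - y‖ ^ α) →
    (∀ x y : E, ‖iteratedFDeriv ℝ m g x - iteratedFDeriv ℝ m g y‖ ≤ Km * ‖x - y‖ ^ α) →
    ∀ j : ℕ, 1 ≤ j → j ≤ m → ∀ hh : ℝ, 0 < hh → ∀ x,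
    ‖iteratedFDeriv ℝ j g x‖
      ≤ s * (Kg * hh ^ (α - (j:ℝ)) + Km * hh ^ ((m:ℝ) + α - (j:ℝ))) := by
  choose S hS1 hS2 using chb_interp_aux (E := E) m hm α hα
  have hsumpos : 0 < ∑ k ∈ Finset.range (m+1), S k + 1 := by
    have h := Finset.sum_nonneg (fun k (_ : k ∈ Finset.range (m+1)) => (hS1 k).le)
    linarith
  refine ⟨∑ k ∈ Finset.range (m+1), S k + 1, hsumpos, ?_⟩
  intro g Kg Km hsm hKg hKm hHol hHm j hj1 hjm hh hhh x
  have hk : m = j + (m - j) := by omega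
  have hb := hS2 (m - j) g Kg Km hsm hKg hKm hHol hHm j hj1 hk hh hhh x
  refine hb.trans ?_
  apply mul_le_mul_of_nonneg_right
  · have hmem : m - j ∈ Finset.range (m+1) := Finset.mem_range.2 (by omega)
    have := Finset.single_le_sum (f := S) (fun k _ => (hS1 k).le) hmem
    linarith
  · have h1 := Real.rpow_nonneg hhh.le (α - (j:ℝ))
    have h2 := Real.rpow_nonneg hhh.le ((m:ℝ) + α - (j:ℝ))
    positivity

/-- Optimized interpolation bounds, in `exp/log` form.  `U j` bounds `‖D^j g‖`,
`V j * r ^ α` bounds the Hölder variation of `D^j g`. -/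
lemma chb_SW (m : ℕ) (hm : 1 ≤ m) (α : ℝ) (hα : α ∈ Ioo (0:ℝ) 1) :
    ∃ s : ℝ, 0 < s ∧ ∀ (g : E → ℝ) (Kg Km : ℝ), ContDiff ℝ (m:ℕ∞) g →
    0 < Kg → 0 < Km →
    (∀ x y : E, |g x - g y| ≤ Kg * ‖x - y‖ ^ α) →
    (∀ x y : E, ‖iteratedFDeriv ℝ m g x - iteratedFDeriv ℝ m g y‖ ≤ Km * ‖x - y‖ ^ α) →
    ∀ j : ℕ, 1 ≤ j → j ≤ m →
    (∀ x, ‖iteratedFDeriv ℝ j g x‖ ≤ s * Real.exp (((((m:ℝ)+α-(j:ℝ)) * Real.log Kg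
        + ((j:ℝ)-α) * Real.log Km)) / m)) ∧
    (∀ x y : E, ‖iteratedFDeriv ℝ j g x - iteratedFDeriv ℝ j g y‖
      ≤ s * Real.exp (((((m:ℝ)-(j:ℝ)) * Real.log Kg + (j:ℝ) * Real.log Km)) / m)
        * ‖x - y‖ ^ α) := by
  obtain ⟨s0, hs0, hP⟩ := chb_interp (E := E) m hm α hα
  obtain ⟨hα0, hα1⟩ := hα
  refine ⟨4 * s0 + 1, by positivity, ?_⟩
  intro g Kg Km hsm hKg hKm hHol hHm j hj1 hjm
  obtain ⟨L, hL⟩ : ∃ L, Real.log Kg = L := ⟨_, rfl⟩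
  obtain ⟨Lm, hLm⟩ : ∃ Lm, Real.log Km = Lm := ⟨_, rfl⟩
  obtain ⟨U, hU⟩ : ∃ U : ℕ → ℝ, ∀ j' : ℕ,
      U j' = Real.exp ((((m:ℝ)+α-(j':ℝ)) * L + ((j':ℝ)-α) * Lm) / m) := ⟨_, fun _ => rfl⟩
  obtain ⟨V, hV⟩ : ∃ V : ℕ → ℝ, ∀ j' : ℕ,
      V j' = Real.exp ((((m:ℝ)-(j':ℝ)) * L + (j':ℝ) * Lm) / m) := ⟨_, fun _ => rfl⟩
  rw [hL, hLm, ← hU j, ← hV j]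
  obtain ⟨hstar, hhstar⟩ : ∃ hs : ℝ, hs = Real.exp ((L - Lm) / m) := ⟨_, rfl⟩
  have hmne : (m:ℝ) ≠ 0 := by positivity
  have hstar_pos : 0 < hstar := hhstar ▸ Real.exp_pos _
  have hexp : ∀ p : ℝ, hstar ^ p = Real.exp ((L - Lm) / m * p) := by
    intro p
    rw [hhstar, ← Real.exp_mul]
  have hKgL : Kg = Real.exp L := by rw [← hL, Real.exp_log hKg]
  have hKmL : Km = Real.exp Lm := by rw [← hLm, Real.exp_log hKm]
  have idU : ∀ j' : ℝ, Kg * hstar ^ (α - j')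
      = Real.exp ((((m:ℝ)+α-j') * L + (j'-α) * Lm) / m) := by
    intro j'
    rw [hexp, hKgL, ← Real.exp_add]
    congr 1
    field_simp
    ring
  have idU' : ∀ j' : ℝ, Km * hstar ^ ((m:ℝ) + α - j')
      = Real.exp ((((m:ℝ)+α-j') * L + (j'-α) * Lm) / m) := by
    intro j'
    rw [hexp, hKmL, ← Real.exp_add]
    congr 1
    field_simp
    ring
  have hUpos : ∀ j' : ℕ, 0 < U j' := fun j' => (hU j') ▸ Real.exp_pos _
  have hVpos : 0 < V j := (hV j) ▸ Real.exp_pos _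
  have hSj : ∀ j' : ℕ, 1 ≤ j' → j' ≤ m → ∀ x, ‖iteratedFDeriv ℝ j' g x‖ ≤ 2 * s0 * U j' := by
    intro j' h1 h2 x
    have hb := hP g Kg Km hsm hKg.le hKm.le hHol hHm j' h1 h2 hstar hstar_pos x
    refine hb.trans (le_of_eq ?_)
    rw [idU (j':ℝ), idU' (j':ℝ), hU j']
    ring
  constructor
  · intro x
    have := hSj j hj1 hjm x
    have := hUpos j
    calc ‖iteratedFDeriv ℝ j g x‖ ≤ 2 * s0 * U j := hSj j hj1 hjm x
      _ ≤ (4 * s0 + 1) * U j := by nlinarith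
  · intro x y
    have hrn : (0:ℝ) ≤ ‖x - y‖ := norm_nonneg _
    have hran : (0:ℝ) ≤ ‖x - y‖ ^ α := Real.rpow_nonneg hrn α
    rcases eq_or_lt_of_le hrn with hr0 | hr0
    · have hxy : x = y := sub_eq_zero.1 (norm_eq_zero.1 hr0.symm)
      subst hxy
      simp only [sub_self, norm_zero]
      positivity
    · rcases eq_or_lt_of_le hjm with hjem | hjlt
      · -- j = m : directly the hypothesis
        subst hjem
        have hVm : V j = Km := by
          rw [hV j, hKmL]
          congr 1
          field_simp
          ring
        refine (hHm x y).trans ?_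
        rw [← hVm]
        apply mul_le_mul_of_nonneg_right _ hran
        nlinarith [hVpos, hs0]
      · -- j < m : mean value theorem plus two-scale comparison
        have hj1m : j + 1 ≤ m := hjlt
        have hIH : ∀ u : E, ‖iteratedFDeriv ℝ (j+1) g u‖ ≤ 2 * s0 * U (j+1) := by
          intro u
          have hb := hP g Kg Km hsm hKg.le hKm.le hHol hHm (j+1) (by omega) hj1m
            hstar hstar_pos u
          refine hb.trans (le_of_eq ?_)
          have i1 := idU ((j:ℝ)+1)
          have i2 := idU' ((j:ℝ)+1)
          have i3 := hU (j+1)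
          push_cast at i1 i2 i3 ⊢
          rw [i1, i2, i3]
          ring
        have hdiff : ∀ u : E, DifferentiableAt ℝ (iteratedFDeriv ℝ j g) u := fun u =>
          hsm.differentiable_iteratedFDeriv (by exact_mod_cast hjlt) u
        have hMVT : ‖iteratedFDeriv ℝ j g x - iteratedFDeriv ℝ j g y‖
            ≤ 2 * s0 * U (j+1) * ‖x - y‖ := by
          have hbound : ∀ u ∈ (univ : Set E),
              ‖fderiv ℝ (iteratedFDeriv ℝ j g) u‖ ≤ 2 * s0 * U (j+1) := by
            intro u _
            rw [norm_fderiv_iteratedFDeriv]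
            exact hIH u
          exact Convex.norm_image_sub_le_of_norm_fderiv_le (fun u _ => hdiff u) hbound
            convex_univ (mem_univ y) (mem_univ x)
        have hU1 : 0 < U (j+1) := hUpos (j+1)
        rcases le_total ‖x - y‖ hstar with hcase | hcase
        · -- small r
          have hkey : U (j+1) * hstar ^ (1 - α) = V j := by
            rw [hU (j+1), hV j, hexp, ← Real.exp_add]
            congr 1
            push_cast
            field_simp
            ring
          have hrr : ‖x - y‖ = ‖x - y‖ ^ (1-α) * ‖x - y‖ ^ α := by
            rw [← Real.rpow_add hr0, show (1:ℝ) - α + α = 1 by ring, Real.rpow_one]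
          have hr1a : ‖x - y‖ ^ (1-α) ≤ hstar ^ (1-α) :=
            Real.rpow_le_rpow hrn hcase (by linarith)
          have h5 : ‖x - y‖ ≤ hstar ^ (1-α) * ‖x - y‖ ^ α := by
            calc ‖x - y‖ = ‖x - y‖ ^ (1-α) * ‖x - y‖ ^ α := hrr
              _ ≤ hstar ^ (1-α) * ‖x - y‖ ^ α := mul_le_mul_of_nonneg_right hr1a hran
          refine hMVT.trans ?_
          calc 2 * s0 * U (j+1) * ‖x - y‖
              ≤ 2 * s0 * U (j+1) * (hstar ^ (1-α) * ‖x - y‖ ^ α) := by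
                apply mul_le_mul_of_nonneg_left h5 (by positivity)
            _ = 2 * s0 * (U (j+1) * hstar ^ (1-α)) * ‖x - y‖ ^ α := by ring
            _ = 2 * s0 * V j * ‖x - y‖ ^ α := by rw [hkey]
            _ ≤ (4 * s0 + 1) * V j * ‖x - y‖ ^ α := by
                nlinarith [mul_nonneg hVpos.le hran, hs0]
        · -- large r
          have hkey : U j = V j * hstar ^ α := by
            rw [hU j, hV j, hexp, ← Real.exp_add]
            congr 1
            field_simp
            ring
          have hsa : hstar ^ α ≤ ‖x - y‖ ^ α := Real.rpow_le_rpow hstar_pos.le hcase hα0.le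
          calc ‖iteratedFDeriv ℝ j g x - iteratedFDeriv ℝ j g y‖
              ≤ ‖iteratedFDeriv ℝ j g x‖ + ‖iteratedFDeriv ℝ j g y‖ := norm_sub_le _ _
            _ ≤ 2 * s0 * U j + 2 * s0 * U j := add_le_add (hSj j hj1 hjm x) (hSj j hj1 hjm y)
            _ = 4 * s0 * (V j * hstar ^ α) := by rw [← hkey]; ring
            _ ≤ (4 * s0 + 1) * V j * ‖x - y‖ ^ α := by
                have h1 : 4 * s0 * (V j * hstar ^ α) ≤ 4 * s0 * (V j * ‖x - y‖ ^ α) := by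
                  apply mul_le_mul_of_nonneg_left _ (by positivity)
                  exact mul_le_mul_of_nonneg_left hsa hVpos.le
                have h2 : (0:ℝ) ≤ V j * ‖x - y‖ ^ α := by positivity
                nlinarith [h1, h2]

/-- Weighted AM-GM combination used for the final Young-type step. -/
lemma chb_young_core (m : ℕ) (hm : 1 ≤ m) (α : ℝ) (hα : α ∈ Ioo (0:ℝ) 1) (L Lm : ℝ)
    (l : ℝ) (hl : 0 ≤ l) (hlm : l * α ≤ m) :
    Real.exp ((l * ((m:ℝ) + α) / m) * L + (((m:ℝ) - l * α) / m) * Lm)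
      ≤ Real.exp (((m:ℝ) + α) / α * L) + Real.exp Lm := by
  obtain ⟨hα0, hα1⟩ := hα
  have hmne : (m:ℝ) ≠ 0 := by positivity
  have hm0 : (0:ℝ) < m := by positivity
  set X := Real.exp (((m:ℝ) + α) / α * L) with hX
  set Y := Real.exp Lm with hY
  have hw1 : (0:ℝ) ≤ l * α / m := by positivity
  have hw2 : (0:ℝ) ≤ ((m:ℝ) - l * α) / m := by
    apply div_nonneg _ hm0.le
    linarith
  have hw : l * α / m + ((m:ℝ) - l * α) / m = 1 := by field_simp; ring
  have hid : Real.exp ((l * ((m:ℝ) + α) / m) * L + (((m:ℝ) - l * α) / m) * Lm)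
      = X ^ (l * α / m) * Y ^ (((m:ℝ) - l * α) / m) := by
    rw [hX, hY, ← Real.exp_mul, ← Real.exp_mul, ← Real.exp_add]
    congr 1
    field_simp
  rw [hid]
  have hgm := Real.geom_mean_le_arith_mean2_weighted hw1 hw2
    (Real.exp_pos (((m:ℝ) + α) / α * L)).le (Real.exp_pos Lm).le hw
  refine hgm.trans ?_
  have hXp : 0 < X := Real.exp_pos _
  have hYp : 0 < Y := Real.exp_pos _
  have h1 : l * α / m ≤ 1 := by linarith
  have h2 : ((m:ℝ) - l * α) / m ≤ 1 := by linarith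
  nlinarith

lemma chb_sum_partSize {n : ℕ} (c : OrderedFinpartition n) :
    ∑ i, c.partSize i = n := by
  classical
  have := Fintype.card_congr c.equivSigma
  simpa [Fintype.card_sigma] using this

lemma chb_norm_cAOF {n : ℕ} (c : OrderedFinpartition n)
    (f : ContinuousMultilinearMap ℝ (fun _ : Fin c.length => ℝ) ℝ)
    (p : ∀ i : Fin c.length, ContinuousMultilinearMap ℝ (fun _ : Fin (c.partSize i) => E) ℝ) :
    ‖c.compAlongOrderedFinpartition f p‖ ≤ ‖f‖ * ∏ i, ‖p i‖ := by
  apply ContinuousMultilinearMap.opNorm_le_bound (by positivity) (fun v => ?_)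
  simp only [OrderedFinpartition.compAlongOrderFinpartition_apply]
  apply (f.le_opNorm _).trans
  rw [mul_assoc, ← c.prod_sigma_eq_prod, ← Finset.prod_mul_distrib]
  gcongr with i _
  exact (p i).le_opNorm _

lemma chb_norm_cAOFL {n : ℕ} (c : OrderedFinpartition n)
    (f : ContinuousMultilinearMap ℝ (fun _ : Fin c.length => ℝ) ℝ) :
    ‖c.compAlongOrderedFinpartitionL ℝ E ℝ ℝ f‖ ≤ ‖f‖ := by
  apply ContinuousMultilinearMap.opNorm_le_bound (norm_nonneg f)
  intro p
  rw [OrderedFinpartition.compAlongOrderedFinpartitionL_apply]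
  exact chb_norm_cAOF c f p

lemma chb_norm_it_f (f : ℝ → ℝ) (k : ℕ) (x : ℝ) :
    ‖iteratedFDeriv ℝ k f x‖ = |iteratedDeriv k f x| := by
  rw [norm_iteratedFDeriv_eq_norm_iteratedDeriv, Real.norm_eq_abs]

lemma chb_f_lip (f : ℝ → ℝ) (k : ℕ) {n : WithTop ℕ∞} (hf : ContDiff ℝ n f)
    (hkn : (k:WithTop ℕ∞) < n) (ck : ℝ)
    (hb : ∀ x, |iteratedDeriv (k+1) f x| ≤ ck) (a b : ℝ) :
    ‖iteratedFDeriv ℝ k f a - iteratedFDeriv ℝ k f b‖ ≤ ck * |a - b| := by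
  have e : ∀ z, iteratedFDeriv ℝ k f z
      = (ContinuousMultilinearMap.piFieldEquiv ℝ (Fin k) ℝ) (iteratedDeriv k f z) := by
    intro z
    rw [iteratedFDeriv_eq_equiv_comp]
    rfl
  rw [e a, e b, ← map_sub, LinearIsometryEquiv.norm_map, Real.norm_eq_abs]
  have hdiff : ∀ x ∈ (univ : Set ℝ), DifferentiableAt ℝ (iteratedDeriv k f) x := by
    intro x _
    exact (hf.differentiable_iteratedDeriv k hkn) x
  have hbound : ∀ x ∈ (univ : Set ℝ), ‖deriv (iteratedDeriv k f) x‖ ≤ ck := by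
    intro x _
    rw [← iteratedDeriv_succ, Real.norm_eq_abs]
    exact hb x
  have := Convex.norm_image_sub_le_of_norm_deriv_le hdiff hbound convex_univ
    (mem_univ b) (mem_univ a)
  simpa [Real.norm_eq_abs] using this

/-- Faà di Bruno formula for the `m`-th derivative of a composition. -/
lemma chb_fdb (m : ℕ) {f : ℝ → ℝ} {g : E → ℝ} (hf : ContDiff ℝ (m:ℕ∞) f)
    (hg : ContDiff ℝ (m:ℕ∞) g) (x : E) :
    iteratedFDeriv ℝ m (fun z => f (g z)) x = ∑ c : OrderedFinpartition m,
      c.compAlongOrderedFinpartition (iteratedFDeriv ℝ c.length f (g x))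
        (fun i => iteratedFDeriv ℝ (c.partSize i) g x) := by
  have h1 : HasFTaylorSeriesUpTo (m:ℕ∞) f (ftaylorSeries ℝ f) :=
    contDiff_iff_ftaylorSeries.1 hf
  have h2 : HasFTaylorSeriesUpTo (m:ℕ∞) g (ftaylorSeries ℝ g) :=
    contDiff_iff_ftaylorSeries.1 hg
  have h3 := (hasFTaylorSeriesUpToOn_univ_iff.2 h1).comp
    (hasFTaylorSeriesUpToOn_univ_iff.2 h2) (mapsTo_univ _ _)
  have h4 := (hasFTaylorSeriesUpToOn_univ_iff.1 h3).eq_iteratedFDeriv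
    (le_refl ((m:ℕ∞) : WithTop ℕ∞)) x
  have h5 : iteratedFDeriv ℝ m (fun z => f (g z)) x
      = (ftaylorSeries ℝ f (g x)).taylorComp (ftaylorSeries ℝ g x) m := h4.symm
  rw [h5]
  rfl

end chb_aux

section chb_young

lemma chb_young_A (m : ℕ) (hm : 1 ≤ m) (α : ℝ) (hα : α ∈ Ioo (0:ℝ) 1) (L Lm : ℝ)
    (k : ℕ) (hk : 1 ≤ k) (hkm : k ≤ m) (b : Fin k → ℕ) (hsum : ∑ i, b i = m) :
    Real.exp L * ∏ i, Real.exp ((((m:ℝ)+α-(b i:ℝ)) * L + ((b i:ℝ)-α) * Lm) / m)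
      ≤ Real.exp (((m:ℝ) + α) / α * L) + Real.exp Lm := by
  have hmne : (m:ℝ) ≠ 0 := by positivity
  have hbsum : ∑ i, ((b i : ℝ)) = (m:ℝ) := by
    rw [← Nat.cast_sum, hsum]
  have hprod : Real.exp L * ∏ i, Real.exp ((((m:ℝ)+α-(b i:ℝ)) * L + ((b i:ℝ)-α) * Lm) / m)
      = Real.exp (((k:ℝ) * ((m:ℝ) + α) / m) * L + (((m:ℝ) - (k:ℝ) * α) / m) * Lm) := by
    rw [← Real.exp_sum, ← Real.exp_add]
    congr 1
    have hsc : ∑ i : Fin k, ((((m:ℝ)+α-(b i:ℝ)) * L + ((b i:ℝ)-α) * Lm) / m)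
        = ∑ i : Fin k, (((((m:ℝ)+α) * L - α * Lm) / m) + ((Lm - L) / m) * (b i : ℝ)) := by
      apply Finset.sum_congr rfl
      intro i _
      field_simp
      ring
    rw [hsc, Finset.sum_add_distrib, Finset.sum_const, ← Finset.mul_sum, hbsum]
    simp only [Finset.card_univ, Fintype.card_fin, nsmul_eq_mul]
    field_simp
    ring
  rw [hprod]
  apply chb_young_core m hm α hα L Lm (k:ℝ) (Nat.cast_nonneg k)
  calc (k:ℝ) * α ≤ (k:ℝ) * 1 := by
        apply mul_le_mul_of_nonneg_left hα.2.le (Nat.cast_nonneg k)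
    _ ≤ (m:ℝ) := by
        rw [mul_one]; exact_mod_cast hkm

lemma chb_young_B (m : ℕ) (hm : 1 ≤ m) (α : ℝ) (hα : α ∈ Ioo (0:ℝ) 1) (L Lm : ℝ)
    (k : ℕ) (hk : 1 ≤ k) (hkm : k ≤ m) (b : Fin k → ℕ) (hsum : ∑ i, b i = m) (i₀ : Fin k) :
    Real.exp ((((m:ℝ)-(b i₀:ℝ)) * L + (b i₀:ℝ) * Lm) / m)
      * ∏ i ∈ Finset.univ.erase i₀,
          Real.exp ((((m:ℝ)+α-(b i:ℝ)) * L + ((b i:ℝ)-α) * Lm) / m)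
      ≤ Real.exp (((m:ℝ) + α) / α * L) + Real.exp Lm := by
  have hmne : (m:ℝ) ≠ 0 := by positivity
  have hbsum : ∑ i ∈ Finset.univ.erase i₀, ((b i : ℝ)) = (m:ℝ) - (b i₀:ℝ) := by
    have h1 : ∑ i ∈ Finset.univ.erase i₀, ((b i : ℝ)) + (b i₀ : ℝ) = ∑ i, ((b i : ℝ)) :=
      Finset.sum_erase_add _ _ (Finset.mem_univ i₀)
    have h2 : ∑ i, ((b i : ℝ)) = (m:ℝ) := by rw [← Nat.cast_sum, hsum]
    linarith
  have hcard : ((Finset.univ.erase i₀).card : ℝ) = (k:ℝ) - 1 := by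
    rw [Finset.card_erase_of_mem (Finset.mem_univ i₀)]
    simp only [Finset.card_univ, Fintype.card_fin]
    rw [Nat.cast_sub hk]
    norm_num
  have hprod : Real.exp ((((m:ℝ)-(b i₀:ℝ)) * L + (b i₀:ℝ) * Lm) / m)
      * ∏ i ∈ Finset.univ.erase i₀,
          Real.exp ((((m:ℝ)+α-(b i:ℝ)) * L + ((b i:ℝ)-α) * Lm) / m)
      = Real.exp ((((k:ℝ)-1) * ((m:ℝ) + α) / m) * L + (((m:ℝ) - ((k:ℝ)-1) * α) / m) * Lm) := by
    rw [← Real.exp_sum, ← Real.exp_add]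
    congr 1
    have hsc : ∑ i ∈ Finset.univ.erase i₀, ((((m:ℝ)+α-(b i:ℝ)) * L + ((b i:ℝ)-α) * Lm) / m)
        = ∑ i ∈ Finset.univ.erase i₀,
            (((((m:ℝ)+α) * L - α * Lm) / m) + ((Lm - L) / m) * (b i : ℝ)) := by
      apply Finset.sum_congr rfl
      intro i _
      field_simp
      ring
    rw [hsc, Finset.sum_add_distrib, Finset.sum_const, ← Finset.mul_sum, hbsum, nsmul_eq_mul,
      hcard]
    field_simp
    ring
  rw [hprod]
  apply chb_young_core m hm α hα L Lm ((k:ℝ) - 1)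
  · have : (1:ℝ) ≤ (k:ℝ) := by exact_mod_cast hk
    linarith
  · have h1 : (k:ℝ) ≤ (m:ℝ) := by exact_mod_cast hkm
    have := hα.1
    have := hα.2
    nlinarith

end chb_young

/-- Hölder bound on the `m`-th derivative of a composition:
`[∇^m (f ∘ g)]_{Ċ^α} ≲ [g]_{Ċ^α}^{(m+α)/α} + [∇^m g]_{Ċ^α}` when
`Σ_{k=1}^{m+2} ‖f^{(k)}‖_∞ ≤ 1`. -/
theorem composition_holder_bound
    (d m : ℕ) (hd : 1 ≤ d) (α : ℝ) (hα : α ∈ Ioo (0 : ℝ) 1) :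
    ∃ C : ℝ, 0 < C ∧
      ∀ (f : ℝ → ℝ) (c : ℕ → ℝ),
        ContDiff ℝ (m + 2) f →
        (∀ k ∈ Finset.Icc 1 (m + 2), ∀ x : ℝ, |iteratedDeriv k f x| ≤ c k) →
        (∑ k ∈ Finset.Icc 1 (m + 2), c k) ≤ 1 →
        ∀ (g : EuclideanSpace ℝ (Fin d) → ℝ) (M : ℕ → ℝ) (Kg Km : ℝ),
          ContDiff ℝ m g →
          (∀ j ∈ Finset.Icc 1 m, ∀ x, ‖iteratedFDeriv ℝ j g x‖ ≤ M j) →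
          0 ≤ Kg → (∀ x y, |g x - g y| ≤ Kg * ‖x - y‖ ^ α) →
          0 ≤ Km →
          (∀ x y, ‖iteratedFDeriv ℝ m g x - iteratedFDeriv ℝ m g y‖ ≤ Km * ‖x - y‖ ^ α) →
          ∀ x y,
            ‖iteratedFDeriv ℝ m (fun z => f (g z)) x -
                iteratedFDeriv ℝ m (fun z => f (g z)) y‖ ≤
              C * (Kg ^ (((m : ℝ) + α) / α) + Km) * ‖x - y‖ ^ α := by
  obtain ⟨hα0, hα1⟩ := hα
  rcases Nat.eq_zero_or_pos m with hm0 | hm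
  · -- m = 0
    subst hm0
    refine ⟨1, one_pos, ?_⟩
    intro f c hf hfb hcsum g M Kg Km hg hM hKg hHol hKm hHm x y
    have hcnn : ∀ k ∈ Finset.Icc 1 (0 + 2), (0:ℝ) ≤ c k := fun k hk =>
      le_trans (abs_nonneg _) (hfb k hk 0)
    have hc1 : c 1 ≤ 1 := by
      have h1 : (1:ℕ) ∈ Finset.Icc 1 (0 + 2) := by simp
      have := Finset.single_le_sum hcnn h1
      linarith
    -- |f a - f b| ≤ c 1 * |a - b|
    have hlip : ∀ a b : ℝ, |f a - f b| ≤ c 1 * |a - b| := by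
      intro a b
      have hd1 : ∀ z ∈ (univ : Set ℝ), DifferentiableAt ℝ f z := by
        intro z _
        exact (hf.differentiable (by norm_num)) z
      have hb1 : ∀ z ∈ (univ : Set ℝ), ‖deriv f z‖ ≤ c 1 := by
        intro z _
        rw [Real.norm_eq_abs, ← iteratedDeriv_one]
        exact hfb 1 (by simp) z
      have := Convex.norm_image_sub_le_of_norm_deriv_le hd1 hb1 convex_univ
        (mem_univ b) (mem_univ a)
      simpa [Real.norm_eq_abs] using this
    have hL : ‖iteratedFDeriv ℝ 0 (fun z => f (g z)) x -
        iteratedFDeriv ℝ 0 (fun z => f (g z)) y‖ = |f (g x) - f (g y)| := by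
      have e : ∀ z : EuclideanSpace ℝ (Fin d), iteratedFDeriv ℝ 0 (fun z => f (g z)) z
          = (continuousMultilinearCurryFin0 ℝ (EuclideanSpace ℝ (Fin d)) ℝ).symm
            (f (g z)) := fun z => rfl
      rw [e x, e y, ← LinearIsometryEquiv.map_sub, LinearIsometryEquiv.norm_map,
        Real.norm_eq_abs]
    rw [hL]
    have h2 : |f (g x) - f (g y)| ≤ Kg * ‖x - y‖ ^ α := by
      calc |f (g x) - f (g y)| ≤ c 1 * |g x - g y| := hlip _ _
        _ ≤ 1 * (Kg * ‖x - y‖ ^ α) :=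
            mul_le_mul hc1 (hHol x y) (abs_nonneg _) zero_le_one
        _ = Kg * ‖x - y‖ ^ α := one_mul _
    have he : ((((0:ℕ)):ℝ) + α) / α = 1 := by
      rw [Nat.cast_zero, zero_add, div_self hα0.ne']
    rw [he, Real.rpow_one]
    have h3 : (0:ℝ) ≤ ‖x - y‖ ^ α := Real.rpow_nonneg (norm_nonneg _) α
    nlinarith [mul_nonneg hKm h3]
  · -- m ≥ 1
    classical
    obtain ⟨s1, hs1, hSW⟩ := chb_SW (E := EuclideanSpace ℝ (Fin d)) m hm α ⟨hα0, hα1⟩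
    obtain ⟨s2, hs2, hI⟩ := chb_interp (E := EuclideanSpace ℝ (Fin d)) m hm α ⟨hα0, hα1⟩
    refine ⟨(Fintype.card (OrderedFinpartition m) : ℝ) * ((m:ℝ)+1) * (s1+1)^(m+1) + 1,
      by positivity, ?_⟩
    intro f c hf hfb hcsum g M Kg Km hg hM hKg hHol hKm hHm x y
    have hrpow : (0:ℝ) ≤ ‖x - y‖ ^ α := Real.rpow_nonneg (norm_nonneg _) α
    have hKgp : (0:ℝ) ≤ Kg ^ (((m:ℝ)+α)/α) := Real.rpow_nonneg hKg _
    have hg' : ContDiff ℝ (m:ℕ∞) g := by exact_mod_cast hg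
    have hRHS : (0:ℝ) ≤ ((Fintype.card (OrderedFinpartition m) : ℝ) * ((m:ℝ)+1)
        * (s1+1)^(m+1) + 1) * (Kg ^ (((m:ℝ)+α)/α) + Km) * ‖x - y‖ ^ α := by positivity
    have hconst : (∀ z w : EuclideanSpace ℝ (Fin d), g z = g w) →
        ‖iteratedFDeriv ℝ m (fun z => f (g z)) x -
          iteratedFDeriv ℝ m (fun z => f (g z)) y‖ ≤
        ((Fintype.card (OrderedFinpartition m) : ℝ) * ((m:ℝ)+1) * (s1+1)^(m+1) + 1)
          * (Kg ^ (((m:ℝ)+α)/α) + Km) * ‖x - y‖ ^ α := by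
      intro hzw
      have e : (fun z : EuclideanSpace ℝ (Fin d) => f (g z)) = (fun _ => f (g x)) :=
        funext fun z => by rw [hzw z x]
      rw [e, iteratedFDeriv_const_of_ne (by omega : m ≠ 0)]
      simpa using hRHS
    by_cases hKg0 : Kg = 0
    · apply hconst
      intro z w
      have h1 : |g z - g w| ≤ 0 := by
        have := hHol z w
        rw [hKg0] at this
        simpa using this
      have := abs_nonpos_iff.1 h1
      linarith [sub_eq_zero.1 this, (rfl : g z = g z)]
    by_cases hKm0 : Km = 0
    · apply hconst
      have hD1 : ∀ z, ‖iteratedFDeriv ℝ 1 g z‖ = 0 := by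
        intro z
        have hb : ∀ hh : ℝ, 0 < hh →
            ‖iteratedFDeriv ℝ 1 g z‖ ≤ s2 * Kg * hh ^ (α - 1) := by
          intro hh hhh
          have h1 := hI g Kg Km hg' hKg hKm hHol hHm 1 le_rfl hm hh hhh z
          rw [hKm0] at h1
          push_cast at h1
          calc ‖iteratedFDeriv ℝ 1 g z‖
              ≤ s2 * (Kg * hh ^ (α - 1) + 0 * hh ^ ((m:ℝ) + α - 1)) := h1
            _ = s2 * Kg * hh ^ (α - 1) := by ring
        have htend : Filter.Tendsto (fun hh : ℝ => s2 * Kg * hh ^ (α - 1))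
            Filter.atTop (nhds 0) := by
          have h0 : Filter.Tendsto (fun hh : ℝ => hh ^ (-(1 - α)))
              Filter.atTop (nhds 0) := tendsto_rpow_neg_atTop (by linarith)
          have he : (fun hh : ℝ => s2 * Kg * hh ^ (α - 1))
              = (fun hh : ℝ => s2 * Kg * hh ^ (-(1-α))) := by
            funext hh
            congr 1
            ring_nf
          rw [he]
          simpa using h0.const_mul (s2 * Kg)
        have hle : ‖iteratedFDeriv ℝ 1 g z‖ ≤ 0 :=
          ge_of_tendsto htend (Filter.eventually_atTop.2
            ⟨1, fun hh hhh => hb hh (lt_of_lt_of_le one_pos hhh)⟩)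
        exact le_antisymm hle (norm_nonneg _)
      have hfder : ∀ z, fderiv ℝ g z = 0 := by
        intro z
        ext u
        have e := iteratedFDeriv_one_apply (𝕜 := ℝ) (f := g) (x := z) (fun _ : Fin 1 => u)
        have hle := (iteratedFDeriv ℝ 1 g z).le_opNorm (fun _ : Fin 1 => u)
        rw [hD1 z, zero_mul] at hle
        rw [e] at hle
        have : fderiv ℝ g z u = 0 := by
          have := norm_le_zero_iff.1 hle
          simpa using this
        simpa using this
      intro z w
      exact is_const_of_fderiv_eq_zero (𝕜 := ℝ)
        (hg'.differentiable (by exact_mod_cast hm.ne')) hfder z w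
    -- main case: Kg, Km > 0
    have hKgpos : 0 < Kg := lt_of_le_of_ne hKg (Ne.symm hKg0)
    have hKmpos : 0 < Km := lt_of_le_of_ne hKm (Ne.symm hKm0)
    have hf2 : ContDiff ℝ (((m:ℕ)):WithTop ℕ∞) f :=
      hf.of_le (by exact_mod_cast Nat.le_add_right m 2)
    have hf' : ContDiff ℝ (m:ℕ∞) f := by exact_mod_cast hf2
    rw [chb_fdb m hf' hg' x, chb_fdb m hf' hg' y, ← Finset.sum_sub_distrib]
    refine le_trans (norm_sum_le _ _) ?_
    have key : ∀ c' : OrderedFinpartition m,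
        ‖c'.compAlongOrderedFinpartition (iteratedFDeriv ℝ c'.length f (g x))
            (fun i => iteratedFDeriv ℝ (c'.partSize i) g x)
          - c'.compAlongOrderedFinpartition (iteratedFDeriv ℝ c'.length f (g y))
            (fun i => iteratedFDeriv ℝ (c'.partSize i) g y)‖
        ≤ ((m:ℝ)+1) * (s1+1)^(m+1) * (Kg ^ (((m:ℝ)+α)/α) + Km) * ‖x - y‖ ^ α := by
      intro c'
      have hk1 : 1 ≤ c'.length := c'.length_pos hm
      have hkm : c'.length ≤ m := c'.length_le
      have hb1 : ∀ i, 1 ≤ c'.partSize i := by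
        intro i
        have := c'.neZero_partSize i
        exact Nat.one_le_iff_ne_zero.2 this.out
      have hbm : ∀ i, c'.partSize i ≤ m := fun i => c'.partSize_le i
      have hbsum := chb_sum_partSize c'
      have hcnn : ∀ k' ∈ Finset.Icc 1 (m+2), (0:ℝ) ≤ c k' := fun k' hk' =>
        le_trans (abs_nonneg _) (hfb k' hk' 0)
      have hcle : ∀ k' ∈ Finset.Icc 1 (m+2), c k' ≤ 1 := by
        intro k' hk'
        have h1 := Finset.sum_le_sum_of_subset_of_nonneg
          (Finset.singleton_subset_iff.2 hk') (fun a ha _ => hcnn a ha)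
        rw [Finset.sum_singleton] at h1
        linarith
      have hkmem : c'.length ∈ Finset.Icc 1 (m+2) := by
        simp only [Finset.mem_Icc]
        omega
      have hk1mem : c'.length + 1 ∈ Finset.Icc 1 (m+2) := by
        simp only [Finset.mem_Icc]
        omega
      have hQy : ‖iteratedFDeriv ℝ c'.length f (g y)‖ ≤ 1 := by
        rw [chb_norm_it_f]
        exact le_trans (hfb _ hkmem _) (hcle _ hkmem)
      have hQd : ‖iteratedFDeriv ℝ c'.length f (g x) - iteratedFDeriv ℝ c'.length f (g y)‖
          ≤ Kg * ‖x - y‖ ^ α := by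
        have h1 := chb_f_lip f c'.length hf
          (by exact_mod_cast (by omega : c'.length < m+2)) (c (c'.length+1))
          (fun z => hfb _ hk1mem z) (g x) (g y)
        refine h1.trans ?_
        calc c (c'.length+1) * |g x - g y|
            ≤ 1 * (Kg * ‖x - y‖ ^ α) :=
              mul_le_mul (hcle _ hk1mem) (hHol x y) (abs_nonneg _) zero_le_one
          _ = Kg * ‖x - y‖ ^ α := one_mul _
      obtain ⟨U, hU⟩ : ∃ U : Fin c'.length → ℝ, ∀ i, U i
          = Real.exp ((((m:ℝ)+α-(c'.partSize i:ℝ)) * Real.log Kg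
            + ((c'.partSize i:ℝ)-α) * Real.log Km) / m) := ⟨_, fun _ => rfl⟩
      obtain ⟨V, hV⟩ : ∃ V : Fin c'.length → ℝ, ∀ i, V i
          = Real.exp ((((m:ℝ)-(c'.partSize i:ℝ)) * Real.log Kg
            + (c'.partSize i:ℝ) * Real.log Km) / m) := ⟨_, fun _ => rfl⟩
      have hUpos : ∀ i, 0 < U i := fun i => (hU i) ▸ Real.exp_pos _
      have hVpos : ∀ i, 0 < V i := fun i => (hV i) ▸ Real.exp_pos _
      have hPS : ∀ i, ∀ z, ‖iteratedFDeriv ℝ (c'.partSize i) g z‖ ≤ s1 * U i := by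
        intro i z
        rw [hU i]
        exact (hSW g Kg Km hg' hKgpos hKmpos hHol hHm (c'.partSize i) (hb1 i) (hbm i)).1 z
      have hPW : ∀ i, ‖iteratedFDeriv ℝ (c'.partSize i) g x
          - iteratedFDeriv ℝ (c'.partSize i) g y‖ ≤ s1 * V i * ‖x - y‖ ^ α := by
        intro i
        rw [hV i]
        exact (hSW g Kg Km hg' hKgpos hKmpos hHol hHm (c'.partSize i) (hb1 i) (hbm i)).2 x y
      -- Young-type bounds
      have hyoungA : Kg * ∏ i, U i ≤ Kg ^ (((m:ℝ)+α)/α) + Km := by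
        have h1 : Kg * ∏ i, U i = Real.exp (Real.log Kg)
            * ∏ i, Real.exp ((((m:ℝ)+α-(c'.partSize i:ℝ)) * Real.log Kg
              + ((c'.partSize i:ℝ)-α) * Real.log Km) / m) := by
          rw [Real.exp_log hKgpos]
          congr 1
          exact Finset.prod_congr rfl (fun i _ => hU i)
        rw [h1]
        have h2 := chb_young_A m hm α ⟨hα0, hα1⟩ (Real.log Kg) (Real.log Km)
          c'.length hk1 hkm c'.partSize hbsum
        refine h2.trans (le_of_eq ?_)
        rw [Real.exp_log hKmpos, Real.rpow_def_of_pos hKgpos]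
        ring_nf
      have hyoungB : ∀ i₀, V i₀ * ∏ i ∈ Finset.univ.erase i₀, U i
          ≤ Kg ^ (((m:ℝ)+α)/α) + Km := by
        intro i₀
        have h1 : V i₀ * ∏ i ∈ Finset.univ.erase i₀, U i
            = Real.exp ((((m:ℝ)-(c'.partSize i₀:ℝ)) * Real.log Kg
                + (c'.partSize i₀:ℝ) * Real.log Km) / m)
              * ∏ i ∈ Finset.univ.erase i₀,
                Real.exp ((((m:ℝ)+α-(c'.partSize i:ℝ)) * Real.log Kg
                  + ((c'.partSize i:ℝ)-α) * Real.log Km) / m) := by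
          rw [hV i₀]
          congr 1
          exact Finset.prod_congr rfl (fun i _ => hU i)
        rw [h1]
        have h2 := chb_young_B m hm α ⟨hα0, hα1⟩ (Real.log Kg) (Real.log Km)
          c'.length hk1 hkm c'.partSize hbsum i₀
        refine h2.trans (le_of_eq ?_)
        rw [Real.exp_log hKmpos, Real.rpow_def_of_pos hKgpos]
        ring_nf
      -- power bound
      have hs1pow : s1 ^ c'.length ≤ (s1+1)^(m+1) := by
        calc s1 ^ c'.length ≤ (s1+1) ^ c'.length :=
          pow_le_pow_left₀ hs1.le (by linarith) _
        _ ≤ (s1+1)^(m+1) := pow_le_pow_right₀ (by linarith) (by omega)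
      -- decomposition
      have hsplit : c'.compAlongOrderedFinpartition (iteratedFDeriv ℝ c'.length f (g x))
            (fun i => iteratedFDeriv ℝ (c'.partSize i) g x)
          - c'.compAlongOrderedFinpartition (iteratedFDeriv ℝ c'.length f (g y))
            (fun i => iteratedFDeriv ℝ (c'.partSize i) g y)
          = c'.compAlongOrderedFinpartition
              (iteratedFDeriv ℝ c'.length f (g x) - iteratedFDeriv ℝ c'.length f (g y))
              (fun i => iteratedFDeriv ℝ (c'.partSize i) g x)
            + ((c'.compAlongOrderedFinpartitionL ℝ (EuclideanSpace ℝ (Fin d)) ℝ ℝ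
                (iteratedFDeriv ℝ c'.length f (g y)))
                (fun i => iteratedFDeriv ℝ (c'.partSize i) g x)
              - (c'.compAlongOrderedFinpartitionL ℝ (EuclideanSpace ℝ (Fin d)) ℝ ℝ
                (iteratedFDeriv ℝ c'.length f (g y)))
                (fun i => iteratedFDeriv ℝ (c'.partSize i) g y)) := by
        have h1 : c'.compAlongOrderedFinpartitionL ℝ (EuclideanSpace ℝ (Fin d)) ℝ ℝ
            (iteratedFDeriv ℝ c'.length f (g x) - iteratedFDeriv ℝ c'.length f (g y))
            = c'.compAlongOrderedFinpartitionL ℝ (EuclideanSpace ℝ (Fin d)) ℝ ℝ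
              (iteratedFDeriv ℝ c'.length f (g x))
            - c'.compAlongOrderedFinpartitionL ℝ (EuclideanSpace ℝ (Fin d)) ℝ ℝ
              (iteratedFDeriv ℝ c'.length f (g y)) := map_sub _ _ _
        have h2 : c'.compAlongOrderedFinpartition
              (iteratedFDeriv ℝ c'.length f (g x) - iteratedFDeriv ℝ c'.length f (g y))
              (fun i => iteratedFDeriv ℝ (c'.partSize i) g x)
            = c'.compAlongOrderedFinpartition (iteratedFDeriv ℝ c'.length f (g x))
              (fun i => iteratedFDeriv ℝ (c'.partSize i) g x)
            - c'.compAlongOrderedFinpartition (iteratedFDeriv ℝ c'.length f (g y))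
              (fun i => iteratedFDeriv ℝ (c'.partSize i) g x) := by
          rw [← c'.compAlongOrderedFinpartitionL_apply, h1]
          rfl
        rw [h2]
        simp only [OrderedFinpartition.compAlongOrderedFinpartitionL_apply]
        abel
      rw [hsplit]
      refine le_trans (norm_add_le _ _) ?_
      -- term (a)
      have hA : ‖c'.compAlongOrderedFinpartition
            (iteratedFDeriv ℝ c'.length f (g x) - iteratedFDeriv ℝ c'.length f (g y))
            (fun i => iteratedFDeriv ℝ (c'.partSize i) g x)‖
          ≤ s1 ^ c'.length * (Kg ^ (((m:ℝ)+α)/α) + Km) * ‖x - y‖ ^ α := by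
        refine le_trans (chb_norm_cAOF c' _ _) ?_
        have hp1 : ∏ i, ‖iteratedFDeriv ℝ (c'.partSize i) g x‖ ≤ ∏ i, (s1 * U i) :=
          Finset.prod_le_prod (fun i _ => norm_nonneg _) (fun i _ => hPS i x)
        have hp2 : ∏ i, (s1 * U i) = s1 ^ c'.length * ∏ i, U i := by
          rw [Finset.prod_mul_distrib, Finset.prod_const, Finset.card_univ, Fintype.card_fin]
        calc ‖iteratedFDeriv ℝ c'.length f (g x) - iteratedFDeriv ℝ c'.length f (g y)‖
              * ∏ i, ‖iteratedFDeriv ℝ (c'.partSize i) g x‖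
            ≤ (Kg * ‖x - y‖ ^ α) * (s1 ^ c'.length * ∏ i, U i) := by
              apply mul_le_mul hQd (hp1.trans (le_of_eq hp2))
                (Finset.prod_nonneg (fun i _ => norm_nonneg _)) (by positivity)
          _ = s1 ^ c'.length * (Kg * ∏ i, U i) * ‖x - y‖ ^ α := by ring
          _ ≤ s1 ^ c'.length * (Kg ^ (((m:ℝ)+α)/α) + Km) * ‖x - y‖ ^ α := by
              apply mul_le_mul_of_nonneg_right _ hrpow
              apply mul_le_mul_of_nonneg_left hyoungA (by positivity)
      -- term (b)
      have hB : ‖(c'.compAlongOrderedFinpartitionL ℝ (EuclideanSpace ℝ (Fin d)) ℝ ℝ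
              (iteratedFDeriv ℝ c'.length f (g y)))
              (fun i => iteratedFDeriv ℝ (c'.partSize i) g x)
            - (c'.compAlongOrderedFinpartitionL ℝ (EuclideanSpace ℝ (Fin d)) ℝ ℝ
              (iteratedFDeriv ℝ c'.length f (g y)))
              (fun i => iteratedFDeriv ℝ (c'.partSize i) g y)‖
          ≤ (m:ℝ) * (s1 ^ c'.length * (Kg ^ (((m:ℝ)+α)/α) + Km) * ‖x - y‖ ^ α) := by
        refine le_trans (ContinuousMultilinearMap.norm_image_sub_le' _ _ _) ?_
        have hBn : ‖c'.compAlongOrderedFinpartitionL ℝ (EuclideanSpace ℝ (Fin d)) ℝ ℝ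
            (iteratedFDeriv ℝ c'.length f (g y))‖ ≤ 1 :=
          le_trans (chb_norm_cAOFL c' _) hQy
        have hsummand : ∀ i₀ : Fin c'.length,
            (∏ j, if j = i₀ then ‖iteratedFDeriv ℝ (c'.partSize i₀) g x
                - iteratedFDeriv ℝ (c'.partSize i₀) g y‖
              else max ‖iteratedFDeriv ℝ (c'.partSize j) g x‖
                ‖iteratedFDeriv ℝ (c'.partSize j) g y‖)
            ≤ s1 ^ c'.length * (Kg ^ (((m:ℝ)+α)/α) + Km) * ‖x - y‖ ^ α := by
          intro i₀
          have hstep1 : (∏ j, if j = i₀ then ‖iteratedFDeriv ℝ (c'.partSize i₀) g x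
                - iteratedFDeriv ℝ (c'.partSize i₀) g y‖
              else max ‖iteratedFDeriv ℝ (c'.partSize j) g x‖
                ‖iteratedFDeriv ℝ (c'.partSize j) g y‖)
              ≤ ∏ j, (if j = i₀ then s1 * V i₀ * ‖x - y‖ ^ α else s1 * U j) := by
            apply Finset.prod_le_prod
            · intro j _
              split
              · exact norm_nonneg _
              · exact le_max_of_le_left (norm_nonneg _)
            · intro j _
              split
              · exact hPW i₀
              · exact max_le (hPS j x) (hPS j y)
          have hstep2 : (∏ j, (if j = i₀ then s1 * V i₀ * ‖x - y‖ ^ α else s1 * U j))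
              = (s1 * V i₀ * ‖x - y‖ ^ α) * ∏ j ∈ Finset.univ.erase i₀, (s1 * U j) := by
            rw [← Finset.mul_prod_erase Finset.univ _ (Finset.mem_univ i₀)]
            rw [if_pos rfl]
            congr 1
            exact Finset.prod_congr rfl
              (fun j hj => if_neg (Finset.ne_of_mem_erase hj))
          have hstep3 : (s1 * V i₀ * ‖x - y‖ ^ α) * ∏ j ∈ Finset.univ.erase i₀, (s1 * U j)
              = s1 ^ c'.length * (V i₀ * ∏ j ∈ Finset.univ.erase i₀, U j) * ‖x - y‖ ^ α := by
            rw [Finset.prod_mul_distrib, Finset.prod_const,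
              Finset.card_erase_of_mem (Finset.mem_univ i₀), Finset.card_univ,
              Fintype.card_fin]
            have : s1 * s1 ^ (c'.length - 1) = s1 ^ c'.length := by
              rw [← pow_succ']
              congr 1
              omega
            calc (s1 * V i₀ * ‖x - y‖ ^ α)
                  * (s1 ^ (c'.length - 1) * ∏ j ∈ Finset.univ.erase i₀, U j)
                = (s1 * s1 ^ (c'.length - 1))
                  * (V i₀ * ∏ j ∈ Finset.univ.erase i₀, U j) * ‖x - y‖ ^ α := by ring
              _ = _ := by rw [this]
          refine hstep1.trans (le_of_eq hstep2 |>.trans (le_of_eq hstep3 |>.trans ?_))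
          apply mul_le_mul_of_nonneg_right _ hrpow
          apply mul_le_mul_of_nonneg_left (hyoungB i₀) (by positivity)
        calc ‖c'.compAlongOrderedFinpartitionL ℝ (EuclideanSpace ℝ (Fin d)) ℝ ℝ
              (iteratedFDeriv ℝ c'.length f (g y))‖
              * ∑ i₀, ∏ j, (if j = i₀ then ‖iteratedFDeriv ℝ (c'.partSize i₀) g x
                  - iteratedFDeriv ℝ (c'.partSize i₀) g y‖
                else max ‖iteratedFDeriv ℝ (c'.partSize j) g x‖
                  ‖iteratedFDeriv ℝ (c'.partSize j) g y‖)
            ≤ 1 * ∑ _i₀ : Fin c'.length,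
              (s1 ^ c'.length * (Kg ^ (((m:ℝ)+α)/α) + Km) * ‖x - y‖ ^ α) := by
              apply mul_le_mul hBn (Finset.sum_le_sum (fun i₀ _ => hsummand i₀))
                (Finset.sum_nonneg (fun i₀ _ => Finset.prod_nonneg (fun j _ => by
                  split
                  · exact norm_nonneg _
                  · exact le_max_of_le_left (norm_nonneg _)))) zero_le_one
          _ = (c'.length : ℝ) * (s1 ^ c'.length * (Kg ^ (((m:ℝ)+α)/α) + Km)
              * ‖x - y‖ ^ α) := by
              rw [one_mul, Finset.sum_const, nsmul_eq_mul, Finset.card_univ, Fintype.card_fin]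
          _ ≤ (m:ℝ) * (s1 ^ c'.length * (Kg ^ (((m:ℝ)+α)/α) + Km) * ‖x - y‖ ^ α) := by
              apply mul_le_mul_of_nonneg_right _ (by positivity)
              exact_mod_cast hkm
      calc ‖c'.compAlongOrderedFinpartition
            (iteratedFDeriv ℝ c'.length f (g x) - iteratedFDeriv ℝ c'.length f (g y))
            (fun i => iteratedFDeriv ℝ (c'.partSize i) g x)‖
          + ‖(c'.compAlongOrderedFinpartitionL ℝ (EuclideanSpace ℝ (Fin d)) ℝ ℝ
              (iteratedFDeriv ℝ c'.length f (g y)))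
              (fun i => iteratedFDeriv ℝ (c'.partSize i) g x)
            - (c'.compAlongOrderedFinpartitionL ℝ (EuclideanSpace ℝ (Fin d)) ℝ ℝ
              (iteratedFDeriv ℝ c'.length f (g y)))
              (fun i => iteratedFDeriv ℝ (c'.partSize i) g y)‖
          ≤ s1 ^ c'.length * (Kg ^ (((m:ℝ)+α)/α) + Km) * ‖x - y‖ ^ α
            + (m:ℝ) * (s1 ^ c'.length * (Kg ^ (((m:ℝ)+α)/α) + Km) * ‖x - y‖ ^ α) :=
            add_le_add hA hB
        _ = ((m:ℝ)+1) * (s1 ^ c'.length * (Kg ^ (((m:ℝ)+α)/α) + Km) * ‖x - y‖ ^ α) := by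
            ring
        _ ≤ ((m:ℝ)+1) * (s1+1)^(m+1) * (Kg ^ (((m:ℝ)+α)/α) + Km) * ‖x - y‖ ^ α := by
            have h1 : s1 ^ c'.length * (Kg ^ (((m:ℝ)+α)/α) + Km) * ‖x - y‖ ^ α
                ≤ (s1+1)^(m+1) * (Kg ^ (((m:ℝ)+α)/α) + Km) * ‖x - y‖ ^ α := by
              apply mul_le_mul_of_nonneg_right _ hrpow
              apply mul_le_mul_of_nonneg_right hs1pow (by positivity)
            calc ((m:ℝ)+1) * (s1 ^ c'.length * (Kg ^ (((m:ℝ)+α)/α) + Km) * ‖x - y‖ ^ α)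
                ≤ ((m:ℝ)+1) * ((s1+1)^(m+1) * (Kg ^ (((m:ℝ)+α)/α) + Km) * ‖x - y‖ ^ α) := by
                  apply mul_le_mul_of_nonneg_left h1 (by positivity)
              _ = _ := by ring
    calc ∑ c' : OrderedFinpartition m, ‖c'.compAlongOrderedFinpartition
            (iteratedFDeriv ℝ c'.length f (g x))
            (fun i => iteratedFDeriv ℝ (c'.partSize i) g x)
          - c'.compAlongOrderedFinpartition (iteratedFDeriv ℝ c'.length f (g y))
            (fun i => iteratedFDeriv ℝ (c'.partSize i) g y)‖
        ≤ ∑ _c' : OrderedFinpartition m,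
          ((m:ℝ)+1) * (s1+1)^(m+1) * (Kg ^ (((m:ℝ)+α)/α) + Km) * ‖x - y‖ ^ α :=
          Finset.sum_le_sum (fun c' _ => key c')
      _ = (Fintype.card (OrderedFinpartition m) : ℝ)
          * (((m:ℝ)+1) * (s1+1)^(m+1) * (Kg ^ (((m:ℝ)+α)/α) + Km) * ‖x - y‖ ^ α) := by
          rw [Finset.sum_const, nsmul_eq_mul, Finset.card_univ]
      _ ≤ ((Fintype.card (OrderedFinpartition m) : ℝ) * ((m:ℝ)+1) * (s1+1)^(m+1) + 1)
          * (Kg ^ (((m:ℝ)+α)/α) + Km) * ‖x - y‖ ^ α := by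
          have h1 : (0:ℝ) ≤ (Kg ^ (((m:ℝ)+α)/α) + Km) * ‖x - y‖ ^ α := by positivity
          nlinarith [h1]
end
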